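/- arXiv:2103.10586 — 6 statements merged into one kernel-verified Lean document; each statement's English description precedes it below -/
import Mathlib

section
/- Let X be a compact metrizable totally disconnected space and let a group Γ act on X by homeomorphisms. Then the action Γ ↷ X is conjugate (equivariantly homeomorphic) to the inverse limit of an inverse sequence of Γ-actions on finite sets (with surjective equivariant connecting maps) if and only if the action is equicontinuous (i.e., the image of Γ in the homeomorphism group of X is an equicontinuous family). -/
/-- The inverse limit of an inverse sequence of sets. -/
def InvLimit {E : ℕ → Type*} (p : ∀ n, E (n + 1) → E n) : Type _ :=
  { x : ∀ n, E n // ∀ n, p n (x (n + 1)) = x n }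

/-- The inverse limit of a sequence of finite (discrete) sets carries the topology
induced from the product of the discrete topologies. -/
instance InvLimit.instTopologicalSpace {E : ℕ → Type*} (p : ∀ n, E (n + 1) → E n) :
    TopologicalSpace (InvLimit p) :=
  letI : ∀ n, TopologicalSpace (E n) := fun _ => ⊥
  instTopologicalSpaceSubtype


namespace OdometerAux

open Relation

variable (Γ : Type*) {X : Type*} [Group Γ] [MetricSpace X] [MulAction Γ X]

/-- One-step relation: `x` and `y` are uniformly `ε`-close along the whole orbit. -/
def S (ε : ℝ) (x y : X) : Prop := ∀ γ : Γ, dist (γ • x) (γ • y) < ε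

theorem S_symm {ε : ℝ} {x y : X} (h : S Γ ε x y) : S Γ ε y x := fun γ => by
  rw [dist_comm]; exact h γ

theorem S_dist {ε : ℝ} {x y : X} (h : S Γ ε x y) : dist x y < ε := by
  simpa using h 1

theorem S_mono {ε ε' : ℝ} (hee : ε ≤ ε') {x y : X} (h : S Γ ε x y) : S Γ ε' x y :=
  fun γ => (h γ).trans_le hee

theorem S_smul {ε : ℝ} (γ₀ : Γ) {x y : X} (h : S Γ ε x y) : S Γ ε (γ₀ • x) (γ₀ • y) := fun γ => by
  rw [← mul_smul, ← mul_smul]; exact h (γ * γ₀)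

/-- Chain relation: reflexive-transitive closure of `S`. -/
def Rel (ε : ℝ) : X → X → Prop := ReflTransGen (S Γ ε)

theorem Rel_refl (ε : ℝ) (x : X) : Rel Γ ε x x := ReflTransGen.refl

theorem Rel_symm {ε : ℝ} {x y : X} (h : Rel Γ ε x y) : Rel Γ ε y x :=
  by haveI : Std.Symm (S Γ (X := X) ε) := ⟨fun _ _ hs => S_symm Γ hs⟩; exact ReflTransGen.symmetric.symm _ _ h

theorem Rel_trans {ε : ℝ} {x y z : X} (h : Rel Γ ε x y) (h' : Rel Γ ε y z) : Rel Γ ε x z :=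
  ReflTransGen.trans h h'

theorem Rel_mono {ε ε' : ℝ} (hee : ε ≤ ε') {x y : X} (h : Rel Γ ε x y) : Rel Γ ε' x y :=
  ReflTransGen.mono (fun _ _ hs => S_mono Γ hee hs) _ _ h

theorem Rel_smul {ε : ℝ} (γ₀ : Γ) {x y : X} (h : Rel Γ ε x y) : Rel Γ ε (γ₀ • x) (γ₀ • y) :=
  ReflTransGen.lift (γ₀ • ·) (fun _ _ hs => S_smul Γ γ₀ hs) _ _ h

variable (X) in
/-- The setoid of `ε`-chain components. -/
def sd (ε : ℝ) : Setoid X := ⟨Rel Γ ε, ⟨fun x => Rel_refl Γ ε x, Rel_symm Γ, Rel_trans Γ⟩⟩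

theorem sd_r {ε : ℝ} {x y : X} : (sd Γ X ε).r x y ↔ Rel Γ ε x y := Iff.rfl

/-- The scale sequence. -/
noncomputable def eps (n : ℕ) : ℝ := (1 / 2 : ℝ) ^ n

theorem eps_pos (n : ℕ) : 0 < eps n := pow_pos (by norm_num) n

theorem eps_anti (n : ℕ) : eps (n + 1) ≤ eps n :=
  pow_le_pow_of_le_one (by norm_num) (by norm_num) (Nat.le_succ n)

theorem eps_lt {ε : ℝ} (hε : 0 < ε) : ∃ n, eps n < ε :=
  exists_pow_lt_of_lt_one hε (by norm_num)

variable {Γ}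

theorem class_open (hUE : ∀ ε > (0 : ℝ), ∃ δ > (0 : ℝ), ∀ x y : X, dist x y < δ → S Γ ε x y)
    {ε : ℝ} (hε : 0 < ε) (x : X) : IsOpen {y : X | Rel Γ ε x y} := by
  rw [Metric.isOpen_iff]
  intro y hy
  obtain ⟨δ, hδ, hδ'⟩ := hUE ε hε
  exact ⟨δ, hδ, fun z hz => Rel_trans Γ hy
    (ReflTransGen.single (hδ' y z (by rwa [Metric.mem_ball, dist_comm] at hz)))⟩

theorem finite_Q [CompactSpace X]
    (hUE : ∀ ε > (0 : ℝ), ∃ δ > (0 : ℝ), ∀ x y : X, dist x y < δ → S Γ ε x y)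
    {ε : ℝ} (hε : 0 < ε) : Finite (Quotient (sd Γ X ε)) := by
  obtain ⟨t, ht⟩ := IsCompact.elim_finite_subcover (isCompact_univ (X := X))
    (fun x : X => {y | Rel Γ ε x y}) (fun x => class_open hUE hε x)
    (fun y _ => Set.mem_iUnion.2 ⟨y, Rel_refl Γ ε y⟩)
  refine Finite.of_surjective (fun i : t => Quotient.mk (sd Γ X ε) i.1) ?_
  intro c
  induction c using Quotient.ind with
  | _ y =>
    obtain ⟨i, hi, hrel⟩ := Set.mem_iUnion₂.1 (ht (Set.mem_univ y))
    exact ⟨⟨i, hi⟩, Quotient.sound hrel⟩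


variable {Γ : Type*} {X : Type*} [Group Γ] [MetricSpace X] [MulAction Γ X]

/-- The connecting map between successive chain-component quotients. -/
noncomputable def Qmap (n : ℕ) : Quotient (sd Γ X (eps (n + 1))) → Quotient (sd Γ X (eps n)) :=
  Quotient.map' id (fun _ _ h => Rel_mono Γ (eps_anti n) h)

@[simp] theorem Qmap_mk (n : ℕ) (a : X) :
    Qmap n (Quotient.mk (sd Γ X (eps (n + 1))) a) = Quotient.mk (sd Γ X (eps n)) a :=
  rfl

/-- The permutation of chain components induced by `γ`. -/
def qperm (ε : ℝ) (γ : Γ) : Quotient (sd Γ X ε) ≃ Quotient (sd Γ X ε) :=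
  Quotient.congr (MulAction.toPerm γ) (fun a b =>
    ⟨fun h => Rel_smul Γ γ h, fun h => (by simpa using Rel_smul Γ γ⁻¹ h : Rel Γ ε a b)⟩)

@[simp] theorem qperm_mk (ε : ℝ) (γ : Γ) (a : X) :
    qperm ε γ (Quotient.mk (sd Γ X ε) a) = Quotient.mk (sd Γ X ε) (γ • a) :=
  rfl

theorem qperm_mul (ε : ℝ) (γ₁ γ₂ : Γ) (c : Quotient (sd Γ X ε)) :
    qperm ε (γ₁ * γ₂) c = qperm ε γ₁ (qperm ε γ₂ c) := by
  induction c using Quotient.ind with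
  | _ a => simp [mul_smul]

/-- The action on chain components, as a group homomorphism. -/
def rhoQ (ε : ℝ) : Γ →* Equiv.Perm (Quotient (sd Γ X ε)) :=
  MonoidHom.mk' (fun γ => qperm ε γ) (by
    intro γ₁ γ₂
    ext c
    simp [qperm_mul, Equiv.Perm.mul_apply])

theorem rel_subset_clopen [CompactSpace X] {K : Set X} (hK : IsClopen K) :
    ∃ ε > (0 : ℝ), ∀ x ∈ K, ∀ y, Rel Γ ε x y → y ∈ K := by
  obtain ⟨δ, hδ, hsub⟩ :=
    hK.isClosed.isCompact.exists_thickening_subset_open hK.isOpen Set.Subset.rfl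
  refine ⟨δ, hδ, fun x hx y hrel => ?_⟩
  induction hrel with
  | refl => exact hx
  | tail h hs ih =>
    exact hsub (Metric.mem_thickening_iff.2 ⟨_, ih, by rw [dist_comm]; exact S_dist Γ hs⟩)

theorem exists_not_rel [CompactSpace X] [TotallyDisconnectedSpace X] {x y : X} (hxy : x ≠ y) :
    ∃ n : ℕ, ¬ Rel Γ (eps n) x y := by
  haveI : TotallySeparatedSpace X := loc_compact_t2_tot_disc_iff_tot_sep.mp inferInstance
  obtain ⟨K, hK, hxK, hyK⟩ := exists_isClopen_of_totally_separated hxy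
  obtain ⟨ε, hε, hsub⟩ := rel_subset_clopen (Γ := Γ) hK
  obtain ⟨n, hn⟩ := eps_lt hε
  exact ⟨n, fun hrel => hyK (hsub x hxK y (Rel_mono Γ hn.le hrel))⟩


section Fwd

variable {Γ X : Type*} [Group Γ] [MetricSpace X] [CompactSpace X]
    [TotallyDisconnectedSpace X] [MulAction Γ X]

theorem forward (hE : Equicontinuous fun γ : Γ => (γ • · : X → X)) :
    ∃ (E : ℕ → Type) (_ : ∀ n, Finite (E n)) (ρ : ∀ n, Γ →* Equiv.Perm (E n))
        (p : ∀ n, E (n + 1) → E n),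
        (∀ n, Function.Surjective (p n)) ∧
        (∀ (n : ℕ) (γ : Γ) (e : E (n + 1)), p n (ρ (n + 1) γ e) = ρ n γ (p n e)) ∧
        ∃ h : X ≃ₜ InvLimit p,
          ∀ (γ : Γ) (x : X) (n : ℕ), (h (γ • x)).1 n = ρ n γ ((h x).1 n) := by
  classical
  -- uniform equicontinuity
  have hUE : ∀ ε > (0 : ℝ), ∃ δ > (0 : ℝ), ∀ x y : X, dist x y < δ → S Γ ε x y := by
    have := Metric.uniformEquicontinuous_iff.1
      (CompactSpace.uniformEquicontinuous_of_equicontinuous hE)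
    intro ε hε
    obtain ⟨δ, hδ, hδ'⟩ := this ε hε
    exact ⟨δ, hδ, fun x y hxy γ => hδ' x y hxy γ⟩
  haveI hfin : ∀ n, Finite (Quotient (sd Γ X (eps n))) := fun n => finite_Q hUE (eps_pos n)
  have hex : ∀ n, ∃ m, Nonempty (Quotient (sd Γ X (eps n)) ≃ Fin m) := fun n =>
    Finite.exists_equiv_fin _
  choose k ke using hex
  let e : ∀ n, Quotient (sd Γ X (eps n)) ≃ Fin (k n) := fun n => (ke n).some
  letI : ∀ n, TopologicalSpace (Fin (k n)) := fun _ => ⊥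
  haveI : ∀ n, DiscreteTopology (Fin (k n)) := fun _ => ⟨rfl⟩
  let p : ∀ n, Fin (k (n + 1)) → Fin (k n) := fun n i => e n (Qmap n ((e (n + 1)).symm i))
  let ρ : ∀ n, Γ →* Equiv.Perm (Fin (k n)) := fun n =>
    MonoidHom.mk' (fun γ => ((e n).symm.trans (qperm (eps n) γ)).trans (e n))
      (by
        intro γ₁ γ₂
        ext i
        simp [Equiv.Perm.mul_apply, qperm_mul])
  have hcompat : ∀ (x : X) (n : ℕ),
      p n (e (n + 1) (Quotient.mk (sd Γ X (eps (n + 1))) x))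
        = e n (Quotient.mk (sd Γ X (eps n)) x) := by
    intro x n; simp [p]
  let fmap : X → InvLimit (E := fun n => Fin (k n)) p := fun x =>
    ⟨fun n => e n (Quotient.mk (sd Γ X (eps n)) x), fun n => hcompat x n⟩
  have hcoord : ∀ n, Continuous fun x : X => e n (Quotient.mk (sd Γ X (eps n)) x) := by
    intro n
    rw [continuous_discrete_rng]
    intro b
    obtain ⟨a, ha⟩ := Quotient.exists_rep ((e n).symm b)
    have hset : (fun x : X => e n (Quotient.mk (sd Γ X (eps n)) x)) ⁻¹' {b}
        = {y | Rel Γ (eps n) a y} := by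
      ext y
      simp only [Set.mem_preimage, Set.mem_singleton_iff, Set.mem_setOf_eq]
      rw [← Equiv.eq_symm_apply (e n), ← ha]
      exact ⟨fun h => Rel_symm Γ (Quotient.exact h), fun h => Quotient.sound (Rel_symm Γ h)⟩
    rw [hset]
    exact class_open hUE (eps_pos n) a
  have hcont_f : Continuous fmap :=
    Continuous.subtype_mk (continuous_pi fun n => hcoord n) _
  have hinj : Function.Injective fmap := by
    intro x y hxy
    by_contra hne
    obtain ⟨n, hn⟩ := exists_not_rel (Γ := Γ) hne
    exact hn (Quotient.exact ((e n).injective (congrFun (congrArg Subtype.val hxy) n)))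
  have hsurj : Function.Surjective fmap := by
    intro z
    have hC : ∀ n, IsClosed {x : X | e n (Quotient.mk (sd Γ X (eps n)) x) = z.1 n} :=
      fun n => IsClosed.preimage (hcoord n) isClosed_singleton
    have hCne : ∀ n, {x : X | e n (Quotient.mk (sd Γ X (eps n)) x) = z.1 n}.Nonempty := by
      intro n
      obtain ⟨a, ha⟩ := Quotient.exists_rep ((e n).symm (z.1 n))
      exact ⟨a, by rw [Set.mem_setOf_eq, ha]; simp⟩
    have hnest : ∀ n, {x : X | e (n + 1) (Quotient.mk (sd Γ X (eps (n + 1))) x) = z.1 (n + 1)}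
        ⊆ {x : X | e n (Quotient.mk (sd Γ X (eps n)) x) = z.1 n} := by
      intro n x hx
      rw [Set.mem_setOf_eq] at hx ⊢
      rw [← z.2 n, ← hx]
      exact (hcompat x n).symm
    obtain ⟨x, hx⟩ := IsCompact.nonempty_iInter_of_sequence_nonempty_isCompact_isClosed _
      hnest hCne ((hC 0).isCompact) hC
    exact ⟨x, Subtype.ext (funext fun n => (Set.mem_iInter.1 hx n : _))⟩
  haveI : T2Space (InvLimit (E := fun n => Fin (k n)) p) :=
    inferInstanceAs (T2Space {x : ∀ n, Fin (k n) // ∀ n, p n (x (n + 1)) = x n})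
  let equiv : X ≃ InvLimit (E := fun n => Fin (k n)) p := Equiv.ofBijective fmap ⟨hinj, hsurj⟩
  have hconte : Continuous equiv := hcont_f
  refine ⟨fun n => Fin (k n), fun _ => inferInstance, ρ, p, ?_, ?_, hconte.homeoOfEquivCompactToT2,
    ?_⟩
  · intro n i
    obtain ⟨a, ha⟩ := Quotient.exists_rep ((e n).symm i)
    refine ⟨e (n + 1) (Quotient.mk (sd Γ X (eps (n + 1))) a), ?_⟩
    simp only [p, Equiv.symm_apply_apply, Qmap_mk]
    rw [ha]
    simp
  · intro n γ i
    obtain ⟨a, ha⟩ := Quotient.exists_rep ((e (n + 1)).symm i)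
    simp only [p, ρ, MonoidHom.mk'_apply, Equiv.trans_apply, Equiv.symm_apply_apply]
    rw [← ha]
    simp
  · intro γ x n
    show e n (Quotient.mk (sd Γ X (eps n)) (γ • x))
      = ρ n γ (e n (Quotient.mk (sd Γ X (eps n)) x))
    simp [ρ]

end Fwd

section Bwd

variable {Γ X : Type*} [Group Γ] [MetricSpace X] [CompactSpace X] [MulAction Γ X]

theorem backward {E : ℕ → Type} (ρ : ∀ n, Γ →* Equiv.Perm (E n))
    (p : ∀ n, E (n + 1) → E n)
    (hequiv : ∀ (n : ℕ) (γ : Γ) (e : E (n + 1)), p n (ρ (n + 1) γ e) = ρ n γ (p n e))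
    (h : X ≃ₜ InvLimit p)
    (hh : ∀ (γ : Γ) (x : X) (n : ℕ), (h (γ • x)).1 n = ρ n γ ((h x).1 n)) :
    Equicontinuous fun γ : Γ => (γ • · : X → X) := by
  classical
  letI : ∀ n, TopologicalSpace (E n) := fun _ => ⊥
  haveI : ∀ n, DiscreteTopology (E n) := fun _ => ⟨rfl⟩
  have hcoord : ∀ n, Continuous fun x : X => (h x).1 n := fun n =>
    ((continuous_apply n).comp continuous_subtype_val).comp h.continuous
  have key : ∀ ε > (0 : ℝ), ∃ N, ∀ x y : X, (h x).1 N = (h y).1 N → dist x y < ε := by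
    intro ε hε
    by_contra hcon
    push_neg at hcon
    have hclosed : ∀ N, IsClosed {q : X × X | (h q.1).1 N = (h q.2).1 N ∧ ε ≤ dist q.1 q.2} := by
      intro N
      exact IsClosed.inter
        (isClosed_eq ((hcoord N).comp continuous_fst) ((hcoord N).comp continuous_snd))
        (isClosed_le continuous_const (continuous_fst.dist continuous_snd))
    have hnest : ∀ N, {q : X × X | (h q.1).1 (N + 1) = (h q.2).1 (N + 1) ∧ ε ≤ dist q.1 q.2}
        ⊆ {q : X × X | (h q.1).1 N = (h q.2).1 N ∧ ε ≤ dist q.1 q.2} := by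
      rintro N ⟨x, y⟩ ⟨h1, h2⟩
      refine ⟨?_, h2⟩
      have h3 := congrArg (p N) h1
      rwa [(h x).2 N, (h y).2 N] at h3
    have hne : ∀ N, {q : X × X | (h q.1).1 N = (h q.2).1 N ∧ ε ≤ dist q.1 q.2}.Nonempty := by
      intro N
      obtain ⟨x, y, h1, h2⟩ := hcon N
      exact ⟨(x, y), h1, h2⟩
    obtain ⟨q, hq⟩ := IsCompact.nonempty_iInter_of_sequence_nonempty_isCompact_isClosed _
      hnest hne ((hclosed 0).isCompact) hclosed
    have h1 : q.1 = q.2 :=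
      h.injective (Subtype.ext (funext fun N => (Set.mem_iInter.1 hq N).1))
    have h2 := (Set.mem_iInter.1 hq 0).2
    rw [h1] at h2
    simp only [dist_self] at h2
    linarith
  intro x₀
  rw [Metric.equicontinuousAt_iff]
  intro ε hε
  obtain ⟨N, hN⟩ := key ε hε
  have hopen : IsOpen {y : X | (h y).1 N = (h x₀).1 N} :=
    (hcoord N).isOpen_preimage {(h x₀).1 N} (isOpen_discrete _)
  obtain ⟨δ, hδ, hball⟩ := Metric.isOpen_iff.1 hopen x₀ rfl
  refine ⟨δ, hδ, fun x hx γ => ?_⟩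
  have hxmem : (h x).1 N = (h x₀).1 N := hball (by rwa [Metric.mem_ball])
  have heq : (h (γ • x₀)).1 N = (h (γ • x)).1 N := by
    rw [hh γ x₀ N, hh γ x N, hxmem]
  exact hN _ _ heq

end Bwd
end OdometerAux

/-- An action of a group `Γ` by homeomorphisms on a compact
metrizable totally disconnected space is conjugate (by an equivariant homeomorphism)
to the inverse limit of an inverse sequence of `Γ`-actions on finite sets with
surjective equivariant connecting maps if and only if it is equicontinuous. -/
theorem conjugate_to_odometer_iff_equicontinuous
    {Γ X : Type*} [Group Γ] [MetricSpace X] [CompactSpace X]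
    [TotallyDisconnectedSpace X] [MulAction Γ X]
    (hcont : ∀ γ : Γ, Continuous fun x : X => γ • x) :
    (∃ (E : ℕ → Type) (_ : ∀ n, Finite (E n)) (ρ : ∀ n, Γ →* Equiv.Perm (E n))
        (p : ∀ n, E (n + 1) → E n),
        (∀ n, Function.Surjective (p n)) ∧
        (∀ (n : ℕ) (γ : Γ) (e : E (n + 1)), p n (ρ (n + 1) γ e) = ρ n γ (p n e)) ∧
        ∃ h : X ≃ₜ InvLimit p,
          ∀ (γ : Γ) (x : X) (n : ℕ), (h (γ • x)).1 n = ρ n γ ((h x).1 n)) ↔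
      Equicontinuous fun γ : Γ => (γ • · : X → X) := by
  constructor
  · rintro ⟨E, hfin, ρ, p, hsurj, hequiv, h, hh⟩
    exact OdometerAux.backward ρ p hequiv h hh
  · exact fun hE => OdometerAux.forward hE
end

section
/- Every isometric Cantor system is residually finite. That is, if Γ acts on the Cantor set X by isometries of a compatible metric d, then for every finite subset F ⊆ Γ and every ε > 0 there exist a finite set E, an action of Γ on E, and a map ζ : E → X such that d(ζ(f·e), f·ζ(e)) < ε for all f ∈ F and e ∈ E, and ζ(E) is ε-dense in X. -/
open Relation Metric Set

/-- Every isometric Cantor system is residually finite: if a group Γ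
acts by isometries on a Cantor set (a nonempty, compact, metrizable, totally
disconnected, perfect space) with a fixed compatible metric, then for every finite
F ⊆ Γ and ε > 0 there is a finite set E with a Γ-action and a map ζ : E → X which is
ε-equivariant on F and has ε-dense image. -/
theorem isometric_cantor_system_residually_finite
    {Γ X : Type*} [Group Γ] [MetricSpace X] [CompactSpace X]
    [TotallyDisconnectedSpace X] [PerfectSpace X] [Nonempty X]
    [MulAction Γ X] (hiso : ∀ γ : Γ, Isometry fun x : X => γ • x) :
    ∀ (F : Finset Γ) (ε : ℝ), 0 < ε →
      ∃ (E : Type) (_ : Finite E) (ρ : Γ →* Equiv.Perm E) (ζ : E → X),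
        (∀ f ∈ F, ∀ e : E, dist (ζ (ρ f e)) (f • ζ e) < ε) ∧
        (∀ x : X, ∃ e : E, dist x (ζ e) ≤ ε) := by
  intro F ε hε
  -- clopen neighborhoods inside small balls
  have hclopen : ∀ x : X, ∃ U : Set X, IsClopen U ∧ x ∈ U ∧ U ⊆ ball x (ε/2) := by
    intro x
    have hb := nhds_basis_clopen x
    have hmem : ball x (ε/2) ∈ nhds x := ball_mem_nhds x (by linarith)
    rcases hb.mem_iff.mp hmem with ⟨V, ⟨hxV, hV⟩, hVU⟩
    exact ⟨V, hV, hxV, hVU⟩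
  choose U hUc hxU hUb using hclopen
  obtain ⟨s, hs⟩ := isCompact_univ.elim_finite_subcover U (fun x => (hUc x).isOpen)
      (fun x _ => mem_iUnion.mpr ⟨x, hxU x⟩)
  classical
  set L := s.toList with hLdef
  set n := L.length with hndef
  -- indexed clopen cover
  set W : ℕ → Set X := fun i => if h : i < n then U (L.get ⟨i, h⟩) else ∅ with hWdef
  have hWc : ∀ i, IsClopen (W i) := by
    intro i; rw [hWdef]; dsimp only; split
    · exact hUc _
    · exact isClopen_empty
  have hWcov : ∀ x : X, ∃ i, x ∈ W i := by
    intro x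
    have hx : x ∈ ⋃ y ∈ s, U y := hs (mem_univ x)
    rcases mem_iUnion₂.mp hx with ⟨y, hy, hxy⟩
    have hyL : y ∈ L := by rw [hLdef]; exact Finset.mem_toList.mpr hy
    rcases List.mem_iff_get.mp hyL with ⟨i, hiy⟩
    refine ⟨i, ?_⟩
    rw [hWdef]; dsimp only
    rw [dif_pos i.isLt]
    simp only [Fin.eta]
    rw [hiy]; exact hxy
  have hWball : ∀ i, ∃ c : X, W i ⊆ ball c (ε/2) := by
    intro i
    rw [hWdef]; dsimp only; split
    · exact ⟨_, hUb _⟩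
    · exact ⟨Classical.arbitrary X, by simp⟩
  -- disjointify
  set V : ℕ → Set X := fun i => W i \ ⋃ j ∈ Finset.range i, W j with hVdef
  have hVc : ∀ i, IsClopen (V i) :=
    fun i => (hWc i).diff (isClopen_biUnion_finset (fun j _ => hWc j))
  have hVcov : ∀ x : X, ∃ i, x ∈ V i := by
    intro x
    have hex := hWcov x
    refine ⟨Nat.find hex, Nat.find_spec hex, ?_⟩
    intro hmem
    rcases mem_iUnion₂.mp hmem with ⟨j, hj, hxj⟩
    exact Nat.find_min hex (Finset.mem_range.mp hj) hxj
  have hVdisj : ∀ i j (x : X), x ∈ V i → x ∈ V j → i = j := by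
    intro i j x hxi hxj
    by_contra hne
    rcases Nat.lt_or_ge i j with h | h
    · exact hxj.2 (mem_iUnion₂.mpr ⟨i, Finset.mem_range.mpr h, hxi.1⟩)
    · have : j < i := lt_of_le_of_ne h (Ne.symm hne)
      exact hxi.2 (mem_iUnion₂.mpr ⟨j, Finset.mem_range.mpr this, hxj.1⟩)
  have hVdiam : ∀ i (x y : X), x ∈ V i → y ∈ V i → dist x y < ε := by
    intro i x y hx hy
    obtain ⟨c, hc⟩ := hWball i
    have h1 := mem_ball.mp (hc hx.1)
    have h2 := mem_ball.mp (hc hy.1)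
    calc dist x y ≤ dist x c + dist c y := dist_triangle _ _ _
      _ < ε/2 + ε/2 := by rw [dist_comm c y]; linarith
      _ = ε := by ring
  have hVlt : ∀ i (x : X), x ∈ V i → i < n := by
    intro i x hx
    by_contra h
    have : W i = ∅ := by rw [hWdef]; dsimp only; rw [dif_neg h]
    have hx1 := hx.1
    rw [this] at hx1
    exact hx1
  -- the separation constant δ
  have hδex : ∃ δ : ℝ, 0 < δ ∧
      ∀ a b : X, dist a b ≤ δ → ∀ i j, a ∈ V i → b ∈ V j → i = j := by
    set Bad : Set (X × X) :=
      ⋃ p ∈ ((Finset.range n ×ˢ Finset.range n).filter (fun p => p.1 ≠ p.2)),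
        V p.1 ×ˢ V p.2 with hBaddef
    have hBadmem : ∀ (a b : X) (i j : ℕ), i ≠ j → a ∈ V i → b ∈ V j → (a, b) ∈ Bad := by
      intro a b i j hij ha hb
      refine mem_iUnion₂.mpr ⟨(i, j), ?_, ha, hb⟩
      exact Finset.mem_filter.mpr ⟨Finset.mem_product.mpr
        ⟨Finset.mem_range.mpr (hVlt i a ha), Finset.mem_range.mpr (hVlt j b hb)⟩, hij⟩
    have hBadcomp : IsCompact Bad := by
      rw [hBaddef]
      apply Set.Finite.isCompact_biUnion (Finset.finite_toSet _)
      intro p _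
      exact ((hVc p.1).isClosed.isCompact).prod ((hVc p.2).isClosed.isCompact)
    by_cases hBadne : Bad.Nonempty
    · obtain ⟨p0, hp0, hmin⟩ := hBadcomp.exists_isMinOn hBadne
        (continuous_dist.continuousOn)
      have hp0pos : 0 < dist p0.1 p0.2 := by
        rcases mem_iUnion₂.mp hp0 with ⟨q, hq, h1, h2⟩
        have hq' := Finset.mem_filter.mp hq
        have : p0.1 ≠ p0.2 := by
          intro hEq
          exact hq'.2 (hVdisj q.1 q.2 p0.1 h1 (hEq ▸ h2))
        exact dist_pos.mpr this
      refine ⟨dist p0.1 p0.2 / 2, by linarith, ?_⟩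
      intro a b hab i j ha hb
      by_contra hij
      have hmem := hBadmem a b i j hij ha hb
      have := hmin hmem
      simp only [Function.comp] at this
      have : dist p0.1 p0.2 ≤ dist a b := this
      linarith
    · refine ⟨1, one_pos, ?_⟩
      intro a b hab i j ha hb
      by_contra hij
      exact hBadne ⟨(a, b), hBadmem a b i j hij ha hb⟩
  obtain ⟨δ, hδpos, hδ⟩ := hδex
  -- the chain relation
  set Step : X → X → Prop := fun a b => dist a b ≤ δ with hStepdef
  have hStepSymm : Symmetric Step := by
    intro a b h
    show dist b a ≤ δ
    have h' : dist a b ≤ δ := h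
    rwa [dist_comm] at h'
  set Rel : X → X → Prop := ReflTransGen Step with hReldef
  letI r : Setoid X :=
    ⟨Rel, ⟨fun _ => ReflTransGen.refl,
      fun h => (@ReflTransGen.stdSymm _ Step ⟨fun _ _ h => hStepSymm h⟩).symm _ _ h, fun h1 h2 => h1.trans h2⟩⟩
  have hRelV : ∀ a b : X, Rel a b → ∀ i, a ∈ V i → b ∈ V i := by
    intro a b hab
    induction hab with
    | refl => exact fun i h => h
    | @tail b' c' hxb hstep ih =>
        intro i ha
        obtain ⟨j, hj⟩ := hVcov c'
        have hstep' : dist b' c' ≤ δ := hstep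
        have := hδ b' c' hstep' i j (ih i ha) hj
        rwa [this]
  have hReldist : ∀ a b : X, Rel a b → dist a b < ε := by
    intro a b hab
    obtain ⟨i, hi⟩ := hVcov a
    exact hVdiam i a b hi (hRelV a b hab i hi)
  -- classes are open, quotient is finite
  have hclassopen : ∀ a : X, IsOpen {x : X | Rel x a} := by
    intro a
    rw [isOpen_iff]
    intro x hx
    refine ⟨δ, hδpos, ?_⟩
    intro z hz
    have hzx : Rel z x := ReflTransGen.single (le_of_lt (mem_ball.mp hz))
    exact hzx.trans hx
  haveI : DiscreteTopology (Quotient r) := by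
    rw [discreteTopology_iff_isOpen_singleton]
    intro q
    induction q using Quotient.ind with
    | _ a =>
      have : IsOpen ((Quotient.mk r) ⁻¹' {⟦a⟧}) := by
        have : (Quotient.mk r) ⁻¹' {(⟦a⟧ : Quotient r)} = {x : X | Rel x a} := by
          ext x
          simp only [Set.mem_preimage, Set.mem_singleton_iff, Set.mem_setOf_eq]
          exact Quotient.eq
        rw [this]
        exact hclassopen a
      exact isOpen_coinduced.mpr this
  haveI : Finite (Quotient r) := finite_of_compact_of_discrete
  -- the action descends to the quotient
  have hRel_inv : ∀ γ : Γ, ∀ a b : X, Rel a b → Rel (γ • a) (γ • b) := by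
    intro γ a b hab
    refine ReflTransGen.lift (fun x => γ • x) (fun x y hxy => ?_) a b hab
    show dist (γ • x) (γ • y) ≤ δ
    have hxy' : dist x y ≤ δ := hxy
    rwa [(hiso γ).dist_eq]
  set π : Γ → Quotient r → Quotient r :=
    fun γ => Quotient.map' (fun x => γ • x) (hRel_inv γ) with hπdef
  have hπmk : ∀ γ (a : X), π γ ⟦a⟧ = ⟦γ • a⟧ := fun γ a => rfl
  have hπcomp : ∀ (γ₁ γ₂ : Γ) (q : Quotient r), π γ₁ (π γ₂ q) = π (γ₁ * γ₂) q := by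
    intro γ₁ γ₂ q
    induction q using Quotient.ind with
    | _ a => rw [hπmk, hπmk, hπmk, mul_smul]
  have hπid : ∀ q : Quotient r, π 1 q = q := by
    intro q
    induction q using Quotient.ind with
    | _ a => rw [hπmk, one_smul]
  set permQ : Γ → Equiv.Perm (Quotient r) := fun γ =>
    ⟨π γ, π γ⁻¹,
      fun q => by rw [hπcomp, inv_mul_cancel, hπid],
      fun q => by rw [hπcomp, mul_inv_cancel, hπid]⟩ with hpermQdef
  obtain ⟨m, ⟨eqv⟩⟩ := Finite.exists_equiv_fin (Quotient r)
  refine ⟨Fin m, inferInstance,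
    MonoidHom.mk' (fun γ => ((eqv.symm.trans (permQ γ)).trans eqv)) ?_,
    fun e => (eqv.symm e).out, ?_, ?_⟩
  · intro γ₁ γ₂
    ext e
    simp only [Equiv.trans_apply, Equiv.Perm.mul_apply, Equiv.symm_apply_apply]
    rw [hpermQdef]
    simp only [Equiv.coe_fn_mk]
    rw [hπcomp]
  · intro f _ e
    simp only [MonoidHom.mk'_apply, Equiv.trans_apply, Equiv.symm_apply_apply]
    set q : Quotient r := eqv.symm e with hqdef
    have hrel : Rel (permQ f q).out (f • q.out) := by
      have h1 : (⟦(permQ f q).out⟧ : Quotient r) = ⟦f • q.out⟧ := by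
        rw [Quotient.out_eq]
        rw [hpermQdef]
        show π f q = _
        conv_lhs => rw [← Quotient.out_eq q]
        rw [hπmk]
      exact Quotient.exact h1
    exact hReldist _ _ hrel
  · intro x
    refine ⟨eqv ⟦x⟧, ?_⟩
    simp only [Equiv.symm_apply_apply]
    have hrel : Rel x (⟦x⟧ : Quotient r).out :=
      (@ReflTransGen.stdSymm _ Step ⟨fun _ _ h => hStepSymm h⟩).symm _ _ (Quotient.mk_out x)
    exact le_of_lt (hReldist _ _ hrel)
end

section
/- Let (X, d) be a compact metric space and R > 0. Define two points of X to be R-connected if they lie in a subset of X that cannot be partitioned into two nonempty open sets at distance ≥ R from each other. Then each R-connected component (maximal R-connected subset) of X is a clopen subset of X, and being in the same R-connected component is an equivalence relation on X. -/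
/-- A subset `S` of a metric space is `R`-connected if it cannot be partitioned into
two nonempty (relatively open) pieces which are at distance at least `R` from each
other. -/
def IsRConnectedSet {X : Type*} [MetricSpace X] (R : ℝ) (S : Set X) : Prop :=
  ¬ ∃ A B : Set X, A.Nonempty ∧ B.Nonempty ∧ A ∪ B = S ∧
      IsOpen ((Subtype.val ⁻¹' A : Set S)) ∧ IsOpen ((Subtype.val ⁻¹' B : Set S)) ∧
      ∀ a ∈ A, ∀ b ∈ B, R ≤ dist a b

/-- Two points are `R`-connected if they both belong to some `R`-connected subset. -/
def RConnRel {X : Type*} [MetricSpace X] (R : ℝ) (x y : X) : Prop :=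
  ∃ S : Set X, IsRConnectedSet R S ∧ x ∈ S ∧ y ∈ S

/-- Chain relation: `y` is reachable from `x` by steps of length `< R`. -/
def ChainRel {X : Type*} [MetricSpace X] (R : ℝ) (x y : X) : Prop :=
  Relation.ReflTransGen (fun a b => dist a b < R) x y

theorem chainRel_symm {X : Type*} [MetricSpace X] {R : ℝ} {x y : X}
    (h : ChainRel R x y) : ChainRel R y x := by
  have hs : Symmetric (fun a b : X => dist a b < R) := fun a b h => by
    show dist b a < R; rwa [dist_comm]
  exact (@Relation.ReflTransGen.stdSymm _ _ ⟨fun a b hab => hs hab⟩).symm _ _ h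

theorem isOpen_chainComp {X : Type*} [MetricSpace X] {R : ℝ} (hR : 0 < R) (x : X) :
    IsOpen {y : X | ChainRel R x y} := by
  rw [Metric.isOpen_iff]
  intro y hy
  exact ⟨R, hR, fun z hz => hy.tail (by rwa [Metric.mem_ball, dist_comm] at hz)⟩

theorem isOpen_chainComp_compl {X : Type*} [MetricSpace X] {R : ℝ} (hR : 0 < R) (x : X) :
    IsOpen {y : X | ChainRel R x y}ᶜ := by
  rw [Metric.isOpen_iff]
  intro y hy
  refine ⟨R, hR, fun z hz hc => hy ?_⟩
  exact hc.tail (by rwa [Metric.mem_ball] at hz)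

/-- If the chain component is split as `A ∪ B` with `dist ≥ R` and `x ∈ A`,
then everything in the component is in `A`. -/
theorem chain_stays {X : Type*} [MetricSpace X] {R : ℝ} {x : X} {A B : Set X}
    (hAB : A ∪ B = {y : X | ChainRel R x y})
    (hd : ∀ a ∈ A, ∀ b ∈ B, R ≤ dist a b) (hxA : x ∈ A) {y : X}
    (hy : ChainRel R x y) : y ∈ A := by
  induction hy with
  | refl => exact hxA
  | tail hxb hbc ih =>
    rename_i b c
    have hc : c ∈ A ∪ B := by rw [hAB]; exact hxb.tail hbc
    rcases hc with hc | hc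
    · exact hc
    · exact absurd hbc (not_lt.mpr (hd b ih c hc))

theorem chainComp_isRConnected {X : Type*} [MetricSpace X] {R : ℝ} (hR : 0 < R) (x : X) :
    IsRConnectedSet R {y : X | ChainRel R x y} := by
  rintro ⟨A, B, ⟨a, ha⟩, ⟨b, hb⟩, hAB, _, _, hd⟩
  have hdisj : ∀ c, c ∈ A → c ∈ B → False := fun c hcA hcB => by
    have := hd c hcA c hcB
    simp at this; linarith
  have hx : x ∈ A ∪ B := by rw [hAB]; exact Set.mem_setOf.mpr Relation.ReflTransGen.refl
  rcases hx with hx | hx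
  · -- x ∈ A : show b ∈ A, contradiction
    have hbc : ChainRel R x b := by
      have : b ∈ {y | ChainRel R x y} := by rw [← hAB]; exact Or.inr hb
      exact this
    exact hdisj b (chain_stays hAB hd hx hbc) hb
  · have hd' : ∀ a ∈ B, ∀ b ∈ A, R ≤ dist a b := fun p hp q hq => by
      rw [dist_comm]; exact hd q hq p hp
    have hAB' : B ∪ A = {y : X | ChainRel R x y} := by rw [Set.union_comm]; exact hAB
    have hac : ChainRel R x a := by
      have : a ∈ {y | ChainRel R x y} := by rw [← hAB]; exact Or.inl ha
      exact this
    exact hdisj a ha (chain_stays hAB' hd' hx hac)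

theorem rConn_subset_chainComp {X : Type*} [MetricSpace X] {R : ℝ} (hR : 0 < R) {x : X}
    {S : Set X} (hS : IsRConnectedSet R S) (hx : x ∈ S) :
    S ⊆ {y : X | ChainRel R x y} := by
  by_contra h
  rw [Set.not_subset] at h
  obtain ⟨b, hbS, hb⟩ := h
  apply hS
  refine ⟨S ∩ {y | ChainRel R x y}, S \ {y | ChainRel R x y},
    ⟨x, hx, Relation.ReflTransGen.refl⟩, ⟨b, hbS, hb⟩, ?_, ?_, ?_, ?_⟩
  · rw [Set.inter_union_diff]
  · have : (Subtype.val ⁻¹' (S ∩ {y | ChainRel R x y}) : Set S)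
        = Subtype.val ⁻¹' {y | ChainRel R x y} := by
      ext ⟨z, hz⟩; simp [hz]
    rw [this]
    exact (isOpen_chainComp hR x).preimage continuous_subtype_val
  · have : (Subtype.val ⁻¹' (S \ {y | ChainRel R x y}) : Set S)
        = Subtype.val ⁻¹' {y | ChainRel R x y}ᶜ := by
      ext ⟨z, hz⟩; simp [hz]
    rw [this]
    exact (isOpen_chainComp_compl hR x).preimage continuous_subtype_val
  · rintro a ⟨-, ha⟩ c ⟨-, hc⟩
    by_contra hlt
    exact hc (ha.tail (not_le.mp hlt))

theorem rConnRel_iff_chainRel {X : Type*} [MetricSpace X] {R : ℝ} (hR : 0 < R) (x y : X) :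
    RConnRel R x y ↔ ChainRel R x y := by
  constructor
  · rintro ⟨S, hS, hx, hy⟩
    exact rConn_subset_chainComp hR hS hx hy
  · intro h
    exact ⟨{z | ChainRel R x z}, chainComp_isRConnected hR x,
      Relation.ReflTransGen.refl, h⟩

/-- In a compact metric space, being `R`-connected is an equivalence
relation, and each `R`-connected component (the maximal `R`-connected subset containing
a given point, which coincides with the equivalence class) is clopen. -/
theorem rConnected_equivalence_and_components_clopen
    {X : Type*} [MetricSpace X] [CompactSpace X] (R : ℝ) (hR : 0 < R) :
    Equivalence (RConnRel R (X := X)) ∧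
    ∀ x : X, IsClopen {y : X | RConnRel R x y} ∧
      IsRConnectedSet R {y : X | RConnRel R x y} ∧
      ∀ S : Set X, IsRConnectedSet R S → x ∈ S → S ⊆ {y : X | RConnRel R x y} := by
  have key : ∀ x y : X, RConnRel R x y ↔ ChainRel R x y := rConnRel_iff_chainRel hR
  have hset : ∀ x : X, {y : X | RConnRel R x y} = {y : X | ChainRel R x y} := by
    intro x; ext y; exact key x y
  constructor
  · refine ⟨fun x => (key x x).mpr Relation.ReflTransGen.refl,
      fun h => (key _ _).mpr (chainRel_symm ((key _ _).mp h)),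
      fun h1 h2 => (key _ _).mpr (((key _ _).mp h1).trans ((key _ _).mp h2))⟩
  · intro x
    rw [hset x]
    exact ⟨⟨isOpen_compl_iff.mp (isOpen_chainComp_compl hR x), isOpen_chainComp hR x⟩,
      chainComp_isRConnected hR x, fun S hS hx => rConn_subset_chainComp hR hS hx⟩
end

section
/- Let L be a lattice (a discrete cocompact subgroup isomorphic to ℤ^n) in ℝ^n and let T^n = ℝ^n / L carry the flat metric induced by the Euclidean metric on ℝ^n. Then the isometry group of T^n is isomorphic (as a topological group) to a semidirect product F ⋉ T^n, where F is the finite group O_n(ℝ) ∩ Aut(L) of orthogonal linear maps preserving L, acting on T^n via the induced maps, and T^n acts on itself by translations. -/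
/-- The group `F = Oₙ(ℝ) ∩ Aut(L)` of linear isometries of `ℝⁿ` preserving the
lattice `L`. -/
noncomputable def latticeAut {n : ℕ} (L : Submodule ℤ (EuclideanSpace ℝ (Fin n))) :
    Subgroup (EuclideanSpace ℝ (Fin n) ≃ₗᵢ[ℝ] EuclideanSpace ℝ (Fin n)) where
  carrier := {f | ∀ x : EuclideanSpace ℝ (Fin n), x ∈ L ↔ f x ∈ L}
  one_mem' := fun _ => Iff.rfl
  mul_mem' := by
    intro a b ha hb x
    exact (hb x).trans (ha (b x))
  inv_mem' := by
    intro a ha x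
    have h := (ha (a⁻¹ x)).symm
    simpa using h

theorem mem_latticeAut {n : ℕ} {L : Submodule ℤ (EuclideanSpace ℝ (Fin n))}
    {f : EuclideanSpace ℝ (Fin n) ≃ₗᵢ[ℝ] EuclideanSpace ℝ (Fin n)} :
    f ∈ latticeAut L ↔ ∀ x : EuclideanSpace ℝ (Fin n), x ∈ L ↔ f x ∈ L :=
  Iff.rfl

/-- The isometry of the flat torus `ℝⁿ / L` induced by a lattice-preserving linear
map of `ℝⁿ`. -/
noncomputable def inducedTorusMap {n : ℕ} (L : Submodule ℤ (EuclideanSpace ℝ (Fin n)))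
    (f : EuclideanSpace ℝ (Fin n) ≃ₗᵢ[ℝ] EuclideanSpace ℝ (Fin n))
    (hf : ∀ x : EuclideanSpace ℝ (Fin n), x ∈ L → f x ∈ L) :
    (EuclideanSpace ℝ (Fin n) ⧸ L) →ₗ[ℤ] (EuclideanSpace ℝ (Fin n) ⧸ L) :=
  Submodule.mapQ L L (f.toLinearEquiv.toLinearMap.restrictScalars ℤ) fun x hx => hf x hx

/-- The group of members of `F = Oₙ(ℝ) ∩ Aut(L)` is given the discrete topology. -/
instance latticeAut.instTopologicalSpace {n : ℕ}
    (L : Submodule ℤ (EuclideanSpace ℝ (Fin n))) :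
    TopologicalSpace ↥(latticeAut L) := ⊥

/-- The isometry group of the flat torus carries the topology of pointwise
convergence (which agrees with the uniform topology since the torus is compact and
the family is equicontinuous). -/
noncomputable instance torusIsomTop {n : ℕ} (L : Submodule ℤ (EuclideanSpace ℝ (Fin n))) :
    TopologicalSpace ((EuclideanSpace ℝ (Fin n) ⧸ L) ≃ᵢ (EuclideanSpace ℝ (Fin n) ⧸ L)) :=
  TopologicalSpace.induced
    (fun g => (g : (EuclideanSpace ℝ (Fin n) ⧸ L) → (EuclideanSpace ℝ (Fin n) ⧸ L)))
    Pi.topologicalSpace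

namespace FlatTorusProof

open Metric Submodule

variable {n : ℕ} {L : Submodule ℤ (EuclideanSpace ℝ (Fin n))}

local notation "V" => EuclideanSpace ℝ (Fin n)
local notation "T" => EuclideanSpace ℝ (Fin n) ⧸ L
local notation "π" => (Submodule.Quotient.mk : EuclideanSpace ℝ (Fin n) → EuclideanSpace ℝ (Fin n) ⧸ L)

lemma norm_mk_eq (x : V) : ‖(π x : T)‖ = infDist x L :=
  QuotientAddGroup.norm_mk (S := L.toAddSubgroup) x

variable (L) in
lemma isClosed_lattice [DiscreteTopology L] : IsClosed (L : Set V) := by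
  haveI : DiscreteTopology L.toAddSubgroup := ‹DiscreteTopology L›
  exact AddSubgroup.isClosed_of_discrete (H := L.toAddSubgroup)

variable (L) in
lemma exists_rho [DiscreteTopology L] : ∃ ρ > 0, ∀ l ∈ L, l ≠ 0 → ρ ≤ ‖l‖ := by
  have h0 : ({0} : Set L) ∈ nhds (0 : L) := (isOpen_discrete _).mem_nhds rfl
  rw [nhds_induced] at h0
  obtain ⟨t, ht, hsub⟩ := h0
  obtain ⟨ε, hε, hball⟩ := Metric.mem_nhds_iff.1 ht
  refine ⟨ε, hε, fun l hl hne => ?_⟩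
  by_contra h
  push_neg at h
  have hmem : (⟨l, hl⟩ : L) ∈ (Subtype.val) ⁻¹' t := by
    apply Set.mem_preimage.2; apply hball
    simpa [Metric.mem_ball, dist_zero_right] using h
  have := hsub hmem
  simp only [Set.mem_singleton_iff] at this
  exact hne (by simpa using congrArg Subtype.val this)

variable {ρ : ℝ} (hρ : ∀ l ∈ L, l ≠ 0 → ρ ≤ ‖l‖)

include hρ in
lemma norm_mk_of_lt {x : V} (h : ‖x‖ < ρ/2) : ‖(π x : T)‖ = ‖x‖ := by
  rw [norm_mk_eq]
  refine le_antisymm (by simpa using infDist_le_dist_of_mem L.zero_mem) ?_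
  by_contra hcon
  push_neg at hcon
  obtain ⟨l, hl, hdl⟩ := (infDist_lt_iff ⟨0, L.zero_mem⟩).1 hcon
  rcases eq_or_ne l 0 with rfl | hne
  · simp [dist_eq_norm] at hdl
  · have h1 : ρ ≤ ‖l‖ := hρ l hl hne
    have h2 : ‖l‖ - ‖x‖ ≤ ‖x - l‖ := by
      have := norm_sub_norm_le l x
      have h3 : ‖l - x‖ = ‖x - l‖ := norm_sub_rev l x
      linarith
    rw [dist_eq_norm] at hdl
    linarith

include hρ in
lemma dist_mk_of_lt {x y : V} (h : ‖x - y‖ < ρ/2) : dist (π x : T) (π y) = ‖x - y‖ := by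
  rw [dist_eq_norm, ← Submodule.Quotient.mk_sub]
  exact norm_mk_of_lt hρ h

include hρ in
lemma eq_of_mk_eq {x y : V} (h : (π x : T) = π y) (hlt : ‖x - y‖ < ρ) : x = y := by
  have hxy : x - y ∈ L := (Submodule.Quotient.eq L).1 h
  rcases eq_or_ne (x - y) 0 with h0 | h0
  · exact sub_eq_zero.1 h0
  · exact absurd hlt (not_lt.2 (hρ _ hxy h0))

lemma exists_lift [DiscreteTopology L] (q : T) (a : V) :
    ∃ x : V, (π x : T) = q ∧ ‖x - a‖ = dist q (π a : T) := by
  obtain ⟨w, rfl⟩ := Submodule.Quotient.mk_surjective L q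
  have hL : IsClosed (L : Set V) := isClosed_lattice L
  obtain ⟨l, hl, hdist⟩ := hL.exists_infDist_eq_dist ⟨0, L.zero_mem⟩ (w - a)
  refine ⟨w - l, ?_, ?_⟩
  · rw [Submodule.Quotient.eq]; simpa using hl
  · rw [dist_eq_norm, ← Submodule.Quotient.mk_sub, norm_mk_eq, hdist, dist_eq_norm]
    rw [sub_right_comm]

lemma norm_eq_zero_torus [DiscreteTopology L] {p : T} (h : ‖p‖ = 0) : p = 0 := by
  obtain ⟨z, rfl⟩ := Submodule.Quotient.mk_surjective L p
  rw [norm_mk_eq] at h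
  have hz : z ∈ closure (L : Set V) := (mem_closure_iff_infDist_zero ⟨0, L.zero_mem⟩).2 h
  rw [(isClosed_lattice L).closure_eq] at hz
  exact (Submodule.Quotient.mk_eq_zero L).2 hz

lemma isOpen_ne_torus [DiscreteTopology L] (c : T) : IsOpen {q : T | q ≠ c} := by
  have hset : {q : T | q ≠ c} = (fun q : T => ‖q - c‖) ⁻¹' (Set.Ioi 0) := by
    ext q
    simp only [Set.mem_setOf_eq, Set.mem_preimage, Set.mem_Ioi]
    constructor
    · intro hq
      rcases (norm_nonneg (q - c)).lt_or_eq with h | h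
      · exact h
      · exact absurd (sub_eq_zero.1 (norm_eq_zero_torus h.symm)) hq
    · intro h hq
      rw [hq] at h; simp at h
  rw [hset]
  exact ((continuous_id.sub continuous_const).norm).isOpen_preimage _ isOpen_Ioi

/-- Rigidity: a distance-preserving map on a Euclidean ball is affine. -/
lemma ball_rigid {c : V} {r : ℝ} (hr : 0 < r) (h : V → V)
    (hiso : ∀ y ∈ ball c r, ∀ y' ∈ ball c r, ‖h y - h y'‖ = ‖y - y'‖) :
    ∃ A : V ≃ₗᵢ[ℝ] V, ∀ y ∈ ball c r, h y = A (y - c) + h c := by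
  classical
  set k : V → V := fun y => h (y + c) - h c with hk
  have hc0 : c ∈ ball c r := mem_ball_self hr
  have hkball : ∀ y ∈ ball (0 : V) r, (y + c) ∈ ball c r := by
    intro y hy; simpa [mem_ball, dist_eq_norm] using mem_ball_iff_norm.1 hy
  have hknorm : ∀ y ∈ ball (0 : V) r, ‖k y‖ = ‖y‖ := by
    intro y hy
    have := hiso (y + c) (hkball y hy) c hc0
    simpa [hk] using this
  have hkdist : ∀ y ∈ ball (0 : V) r, ∀ y' ∈ ball (0 : V) r, ‖k y - k y'‖ = ‖y - y'‖ := by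
    intro y hy y' hy'
    have := hiso (y + c) (hkball y hy) (y' + c) (hkball y' hy')
    simpa [hk, sub_sub_sub_cancel_right, add_sub_add_right_eq_sub] using this
  have hkinner : ∀ y ∈ ball (0 : V) r, ∀ y' ∈ ball (0 : V) r,
      inner ℝ (k y) (k y') = (inner ℝ y y' : ℝ) := by
    intro y hy y' hy'
    rw [real_inner_eq_norm_mul_self_add_norm_mul_self_sub_norm_sub_mul_self_div_two,
      real_inner_eq_norm_mul_self_add_norm_mul_self_sub_norm_sub_mul_self_div_two (x := y),
      hknorm y hy, hknorm y' hy', hkdist y hy y' hy']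
  set e : OrthonormalBasis (Fin n) ℝ V := EuclideanSpace.basisFun (Fin n) ℝ with he
  have heball : ∀ i : Fin n, ((r/2) • e i) ∈ ball (0 : V) r := by
    intro i
    simp only [mem_ball, dist_eq_norm, sub_zero, norm_smul]
    rw [e.orthonormal.1 i, mul_one, Real.norm_eq_abs, abs_of_pos (by linarith)]
    linarith
  set u : Fin n → V := fun i => (2/r) • k ((r/2) • e i) with hu
  have h0ball : (0 : V) ∈ ball (0 : V) r := mem_ball_self hr
  have hk0 : k 0 = 0 := by
    have := hknorm 0 h0ball
    simpa using this
  have hinner_u : ∀ (i : Fin n) (y : V), y ∈ ball (0 : V) r →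
      (inner ℝ (u i) (k y) : ℝ) = y i := by
    intro i y hy
    have h1 : (inner ℝ (k ((r/2) • e i)) (k y) : ℝ) = inner ℝ ((r/2) • e i) y :=
      hkinner _ (heball i) y hy
    have h2 : (inner ℝ ((r/2) • e i) y : ℝ) = (r/2) * inner ℝ (e i) y := by
      rw [real_inner_smul_left]
    have h3 : (inner ℝ (e i) y : ℝ) = y i := by
      have := (EuclideanSpace.basisFun (Fin n) ℝ).repr_apply_apply y i
      rw [EuclideanSpace.basisFun_repr] at this
      exact this.symm
    rw [hu]
    simp only [real_inner_smul_left]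
    rw [h1, h2, h3]
    field_simp
  have horth : Orthonormal ℝ u := by
    rw [orthonormal_iff_ite]
    intro i j
    have h1 : (inner ℝ (k ((r/2) • e i)) (k ((r/2) • e j)) : ℝ)
        = inner ℝ ((r/2) • e i) ((r/2) • e j) := hkinner _ (heball i) _ (heball j)
    have h2 := orthonormal_iff_ite.1 e.orthonormal i j
    simp only [hu, real_inner_smul_left, real_inner_smul_right, h1, h2]
    have hrne : r ≠ 0 := ne_of_gt hr
    rcases eq_or_ne i j with rfl | hij
    · simp only [if_pos rfl]
      field_simp
    · simp [hij]
  rcases isEmpty_or_nonempty (Fin n) with hemp | hne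
  · haveI : Subsingleton V := ⟨fun a b => PiLp.ext fun i => isEmptyElim i⟩
    exact ⟨LinearIsometryEquiv.refl ℝ V, fun y _ => Subsingleton.elim _ _⟩
  have hcard : Fintype.card (Fin n) = Module.finrank ℝ V := by
    simp [finrank_euclideanSpace_fin]
  set b' : OrthonormalBasis (Fin n) ℝ V :=
    (basisOfLinearIndependentOfCardEqFinrank horth.linearIndependent hcard).toOrthonormalBasis
      (by rwa [coe_basisOfLinearIndependentOfCardEqFinrank]) with hb'
  have hb'coe : ∀ i, b' i = u i := by
    intro i
    simp only [hb', Module.Basis.coe_toOrthonormalBasis, coe_basisOfLinearIndependentOfCardEqFinrank]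
  refine ⟨b'.repr.symm, ?_⟩
  intro y hy
  have hyc : y - c ∈ ball (0 : V) r := by
    simpa [mem_ball, dist_eq_norm] using mem_ball_iff_norm.1 hy
  have key : k (y - c) = b'.repr.symm (y - c) := by
    apply b'.repr.injective
    ext i
    rw [b'.repr_apply_apply, LinearIsometryEquiv.apply_symm_apply, hb'coe i]
    exact hinner_u i (y - c) hyc
  have hhy : h y = k (y - c) + h c := by simp [hk]
  rw [hhy, key]

lemma affine_eq {A B : V ≃ₗᵢ[ℝ] V} {v w c : V} {δ : ℝ} (hδ : 0 < δ)
    (h : ∀ y ∈ ball c δ, A y + v = B y + w) : ∀ y, A y + v = B y + w := by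
  have hc := h c (mem_ball_self hδ)
  have hAB : ∀ z : V, A z = B z := by
    intro z
    have hε : 0 < δ / (‖z‖ + 1) := by positivity
    have hmem : c + (δ / (‖z‖ + 1)) • z ∈ ball c δ := by
      rw [mem_ball_iff_norm]
      have : ‖c + (δ / (‖z‖ + 1)) • z - c‖ = (δ / (‖z‖ + 1)) * ‖z‖ := by
        rw [add_sub_cancel_left, norm_smul, Real.norm_eq_abs, abs_of_pos hε]
      rw [this]
      rw [div_mul_eq_mul_div, div_lt_iff₀ (by positivity)]
      nlinarith [norm_nonneg z]
    have := h _ hmem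
    simp only [map_add, map_smul] at this
    have h2 : (δ / (‖z‖ + 1)) • A z = (δ / (‖z‖ + 1)) • B z := by
      have e' : A c + v + (δ / (‖z‖ + 1)) • A z = B c + w + (δ / (‖z‖ + 1)) • B z := by
        calc A c + v + (δ / (‖z‖ + 1)) • A z = A c + (δ / (‖z‖ + 1)) • A z + v := by abel
          _ = B c + (δ / (‖z‖ + 1)) • B z + w := this
          _ = B c + w + (δ / (‖z‖ + 1)) • B z := by abel
      rw [hc] at e'
      exact add_left_cancel e'
    exact smul_right_injective V (ne_of_gt hε) h2
  intro y
  have hvw : v = w := by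
    have := hc
    rw [hAB c] at this
    exact add_left_cancel this
  rw [hAB y, hvw]

include hρ in
lemma local_lift [DiscreteTopology L] (hρ0 : 0 < ρ)
    (g : T ≃ᵢ T) (x b : V) (hb : (π b : T) = g (π x)) :
    ∃ h : V → V, ∀ y ∈ ball x (ρ/4),
      ((π (h y) : T) = g (π y) ∧ ‖h y - b‖ = ‖y - x‖) := by
  have hch : ∀ y : V, ∃ z : V, (π z : T) = g (π y) ∧ ‖z - b‖ = dist (g (π y)) (π b : T) :=
    fun y => exists_lift _ b
  choose h h1 h2 using hch
  refine ⟨h, fun y hy => ⟨h1 y, ?_⟩⟩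
  rw [mem_ball_iff_norm] at hy
  rw [h2 y, hb, g.dist_eq, dist_mk_of_lt hρ (by linarith)]

include hρ in
lemma lift_dist_preserving [DiscreteTopology L] (g : T ≃ᵢ T) {x b : V} {h : V → V}
    (hh : ∀ y ∈ ball x (ρ/4), ((π (h y) : T) = g (π y) ∧ ‖h y - b‖ = ‖y - x‖)) :
    ∀ y ∈ ball x (ρ/4), ∀ y' ∈ ball x (ρ/4), ‖h y - h y'‖ = ‖y - y'‖ := by
  intro y hy y' hy'
  obtain ⟨hy1, hy2⟩ := hh y hy
  obtain ⟨hy1', hy2'⟩ := hh y' hy'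
  rw [mem_ball_iff_norm] at hy hy'
  have hbound : ‖h y - h y'‖ < ρ/2 := by
    have : ‖h y - h y'‖ ≤ ‖h y - b‖ + ‖h y' - b‖ := by
      have := norm_sub_le (h y - b) (h y' - b)
      simpa [sub_sub_sub_cancel_right] using this
    rw [hy2, hy2'] at this
    linarith
  have hyy' : ‖y - y'‖ < ρ/2 := by
    have := norm_sub_le (y - x) (y' - x)
    rw [sub_sub_sub_cancel_right] at this
    linarith
  have d1 : dist (π (h y) : T) (π (h y')) = ‖h y - h y'‖ := dist_mk_of_lt hρ hbound
  have d2 : dist (π y : T) (π y') = ‖y - y'‖ := dist_mk_of_lt hρ hyy'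
  rw [hy1, hy1', g.dist_eq] at d1
  rw [d2] at d1
  exact d1.symm

include hρ in
lemma exists_linear_lift [DiscreteTopology L] (hρ0 : 0 < ρ)
    (g : T ≃ᵢ T) (hg : g 0 = 0) :
    ∃ f : V ≃ₗᵢ[ℝ] V, ∀ x : V, g (π x) = π (f x) := by
  have hr : 0 < ρ/4 := by linarith
  have hmk0 : (π (0 : V) : T) = 0 := Submodule.Quotient.mk_zero L
  obtain ⟨h₀, hh₀⟩ := local_lift hρ hρ0 g 0 0 (by rw [hmk0, hg])
  obtain ⟨A, hA⟩ := ball_rigid hr h₀ (lift_dist_preserving hρ g hh₀)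
  have h₀0 : h₀ 0 = 0 := by
    have := (hh₀ 0 (mem_ball_self hr)).2
    simpa using this
  have hAball : ∀ y ∈ ball (0 : V) (ρ/4), g (π y) = π (A y) := by
    intro y hy
    rw [← (hh₀ y hy).1, hA y hy, h₀0, add_zero, sub_zero]
  set S : Set V := {x : V | ∀ y : V, ‖y - x‖ < ρ/4 → g (π y) = π (A y)} with hS
  have hS0 : (0 : V) ∈ S := fun y hy => hAball y (mem_ball_iff_norm.2 (by simpa using hy))
  have hSclosed : IsClosed S := by
    apply isClosed_of_closure_subset
    intro x hxcl y hyx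
    obtain ⟨x', hx'S, hx'd⟩ := Metric.mem_closure_iff.1 hxcl (ρ/4 - ‖y - x‖) (by linarith)
    apply hx'S
    rw [dist_eq_norm] at hx'd
    calc ‖y - x'‖ ≤ ‖y - x‖ + ‖x - x'‖ := by
          have := norm_add_le (y - x) (x - x'); simpa [sub_add_sub_cancel] using this
      _ < ρ/4 := by linarith
  have hSopen : IsOpen S := by
    rw [Metric.isOpen_iff]
    intro x hx
    refine ⟨ρ/4, hr, fun x' hx' => ?_⟩
    rw [mem_ball, dist_eq_norm] at hx'
    have hb : (π (A x') : T) = g (π x') := (hx x' hx').symm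
    obtain ⟨h, hh⟩ := local_lift hρ hρ0 g x' (A x') hb
    obtain ⟨B, hB⟩ := ball_rigid hr h (lift_dist_preserving hρ g hh)
    have hhx' : h x' = A x' := by
      have := (hh x' (mem_ball_self hr)).2
      simpa [sub_eq_zero] using this
    obtain ⟨δ, hδdef⟩ : ∃ δ : ℝ, δ = ρ/4 - ‖x' - x‖ := ⟨_, rfl⟩
    have hδ : 0 < δ := by rw [hδdef]; linarith
    have hδr : δ ≤ ρ/4 := by
      have := norm_nonneg (x' - x); rw [hδdef]; linarith
    have hsub : ∀ y ∈ ball x' δ, y ∈ ball x (ρ/4) ∧ y ∈ ball x' (ρ/4) := by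
      intro y hy
      rw [mem_ball_iff_norm] at hy
      constructor
      · rw [mem_ball_iff_norm]
        calc ‖y - x‖ ≤ ‖y - x'‖ + ‖x' - x‖ := by
              have := norm_add_le (y - x') (x' - x); simpa [sub_add_sub_cancel] using this
          _ < ρ/4 := by rw [hδdef] at hy; linarith
      · rw [mem_ball_iff_norm]; linarith
    have hagree : ∀ y ∈ ball x' δ, h y = A y := by
      intro y hy
      obtain ⟨hy1, hy2⟩ := hsub y hy
      have e1 : (π (h y) : T) = π (A y) := by
        rw [(hh y hy2).1]
        exact hx y (mem_ball_iff_norm.1 hy1)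
      have hyx' : ‖y - x'‖ < δ := mem_ball_iff_norm.1 hy
      have e2 : ‖h y - A y‖ < ρ := by
        have t1 : ‖h y - A x'‖ = ‖y - x'‖ := (hh y hy2).2
        have t2 : ‖A x' - A y‖ = ‖x' - y‖ := by
          rw [← map_sub, A.norm_map]
        have t3 : ‖h y - A y‖ ≤ ‖h y - A x'‖ + ‖A x' - A y‖ := by
          have := norm_add_le (h y - A x') (A x' - A y); simpa [sub_add_sub_cancel] using this
        rw [t1, t2, norm_sub_rev x' y] at t3
        linarith
      exact eq_of_mk_eq hρ e1 e2
    have haff : ∀ y : V, B y + (A x' - B x') = A y + 0 := by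
      apply affine_eq hδ
      intro y hy
      have h1 : h y = B (y - x') + h x' := hB y ((hsub y hy).2)
      have h2 : h y = A y := hagree y hy
      rw [hhx'] at h1
      rw [map_sub] at h1
      have : B y + (A x' - B x') = h y := by rw [h1]; abel
      rw [this, h2, add_zero]
    intro y hy
    have h1 : h y = B (y - x') + A x' := by rw [hB y (mem_ball_iff_norm.2 hy), hhx']
    have h2 : B (y - x') + A x' = A y := by
      have := haff y
      rw [map_sub]
      rw [add_zero] at this
      rw [← this]; abel
    rw [← (hh y (mem_ball_iff_norm.2 hy)).1, h1, h2]
  have hSuniv : S = Set.univ := IsClopen.eq_univ ⟨hSclosed, hSopen⟩ ⟨0, hS0⟩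
  refine ⟨A, fun x => ?_⟩
  have hx : x ∈ S := hSuniv ▸ Set.mem_univ x
  exact hx x (by simpa using hr)

end FlatTorusProof


namespace FlatTorusProof

open Metric Submodule

variable {n : ℕ} {L : Submodule ℤ (EuclideanSpace ℝ (Fin n))}

local notation "V" => EuclideanSpace ℝ (Fin n)
local notation "T" => EuclideanSpace ℝ (Fin n) ⧸ L
local notation "π" => (Submodule.Quotient.mk : EuclideanSpace ℝ (Fin n) → EuclideanSpace ℝ (Fin n) ⧸ L)

lemma map_lattice (f : V ≃ₗᵢ[ℝ] V) (hf : f ∈ latticeAut L) :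
    Submodule.map (LinearEquiv.restrictScalars ℤ f.toLinearEquiv : V →ₗ[ℤ] V) L = L := by
  ext y
  simp only [Submodule.mem_map]
  constructor
  · rintro ⟨x, hx, rfl⟩
    exact (mem_latticeAut.1 hf x).1 hx
  · intro hy
    exact ⟨f.symm y, by simpa [(mem_latticeAut.1 hf (f.symm y))] using hy, by simp⟩

lemma norm_mk_map (f : V ≃ₗᵢ[ℝ] V) (hf : f ∈ latticeAut L) (z : V) :
    ‖(π (f z) : T)‖ = ‖(π z : T)‖ := by
  rw [norm_mk_eq, norm_mk_eq]
  have himg : f '' (L : Set V) = (L : Set V) := by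
    ext y
    constructor
    · rintro ⟨x, hx, rfl⟩
      exact (mem_latticeAut.1 hf x).1 hx
    · intro hy
      exact ⟨f.symm y, (mem_latticeAut.1 hf (f.symm y)).2 (by simpa using hy), by simp⟩
  rw [← himg, infDist_image f.isometry, himg]

/-- The isometry of the torus induced by a lattice-preserving linear isometry. -/
noncomputable def torusIso (f : V ≃ₗᵢ[ℝ] V) (hf : f ∈ latticeAut L) : T ≃ᵢ T where
  toEquiv := (Submodule.Quotient.equiv L L
    (LinearEquiv.restrictScalars ℤ f.toLinearEquiv) (map_lattice f hf)).toEquiv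
  isometry_toFun := by
    have happ : ∀ z : V, (Submodule.Quotient.equiv L L
        (LinearEquiv.restrictScalars ℤ f.toLinearEquiv) (map_lattice f hf)) (π z) = π (f z) := by
      intro z
      simp [Submodule.Quotient.equiv]
    apply Isometry.of_dist_eq
    intro q q'
    obtain ⟨x, rfl⟩ := Submodule.Quotient.mk_surjective L q
    obtain ⟨y, rfl⟩ := Submodule.Quotient.mk_surjective L q'
    show dist ((Submodule.Quotient.equiv L L
        (LinearEquiv.restrictScalars ℤ f.toLinearEquiv) (map_lattice f hf)) (π x))
      ((Submodule.Quotient.equiv L L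
        (LinearEquiv.restrictScalars ℤ f.toLinearEquiv) (map_lattice f hf)) (π y)) = _
    rw [happ x, happ y, dist_eq_norm, dist_eq_norm, ← Submodule.Quotient.mk_sub,
      ← Submodule.Quotient.mk_sub, ← map_sub]
    exact norm_mk_map f hf (x - y)

lemma torusIso_mk (f : V ≃ₗᵢ[ℝ] V) (hf : f ∈ latticeAut L) (x : V) :
    torusIso f hf (π x) = π (f x) := by
  show (Submodule.Quotient.equiv L L
      (LinearEquiv.restrictScalars ℤ f.toLinearEquiv) (map_lattice f hf)) (π x) = π (f x)
  simp [Submodule.Quotient.equiv]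

/-- The candidate isomorphism, as a bare function. -/
noncomputable def Phi0 (p : ↥(latticeAut L) × (EuclideanSpace ℝ (Fin n) ⧸ L)) :
    (EuclideanSpace ℝ (Fin n) ⧸ L) ≃ᵢ (EuclideanSpace ℝ (Fin n) ⧸ L) :=
  (torusIso p.1.1 p.1.2).trans (IsometryEquiv.addRight p.2)

lemma Phi0_mk (f : ↥(latticeAut L)) (t : T) (x : V) :
    Phi0 (f, t) (π x) = π (f.1 x) + t := by
  show (IsometryEquiv.addRight t) (torusIso f.1 f.2 (π x)) = _
  rw [torusIso_mk]
  simp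

lemma mk_zero_torus : (π (0 : V) : T) = 0 := Submodule.Quotient.mk_zero L

lemma Phi0_zero (f : ↥(latticeAut L)) (t : T) : Phi0 (f, t) 0 = t := by
  rw [← mk_zero_torus, Phi0_mk]
  rw [map_zero, mk_zero_torus, zero_add]

lemma lin_eq_of_mk_eq [DiscreteTopology L] {f f' : V ≃ₗᵢ[ℝ] V}
    (h : ∀ x : V, (π (f x) : T) = π (f' x)) : f = f' := by
  have hmem : ∀ x : V, f x - f' x ∈ L := fun x => (Submodule.Quotient.eq L).1 (h x)
  have hc : Continuous (fun x : V => (⟨f x - f' x, hmem x⟩ : L)) :=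
    Continuous.subtype_mk (f.continuous.sub f'.continuous) _
  have hlc := (IsLocallyConstant.iff_continuous _).2 hc
  apply LinearIsometryEquiv.ext
  intro x
  have h1 := hlc.apply_eq_of_preconnectedSpace x 0
  have h2 := congrArg Subtype.val h1
  simp only [map_zero, sub_self] at h2
  exact sub_eq_zero.1 h2

lemma Phi0_injective [DiscreteTopology L] :
    Function.Injective (Phi0 : ↥(latticeAut L) × T → (T ≃ᵢ T)) := by
  rintro ⟨f, t⟩ ⟨f', t'⟩ h
  have ht : t = t' := by
    have := congrArg (fun e : T ≃ᵢ T => e 0) h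
    simpa [Phi0_zero] using this
  subst ht
  have hf : ∀ x : V, (π (f.1 x) : T) = π (f'.1 x) := by
    intro x
    have := congrArg (fun e : T ≃ᵢ T => e (π x)) h
    simp only [Phi0_mk] at this
    exact add_right_cancel this
  have : f.1 = f'.1 := lin_eq_of_mk_eq hf
  rw [Prod.mk.injEq]
  exact ⟨Subtype.ext this, rfl⟩

lemma Phi0_surjective [DiscreteTopology L] :
    Function.Surjective (Phi0 : ↥(latticeAut L) × T → (T ≃ᵢ T)) := by
  intro g
  obtain ⟨ρ, hρ0, hρ⟩ := exists_rho L
  set g₀ : T ≃ᵢ T := g.trans (IsometryEquiv.addRight (-(g 0))) with hg₀def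
  have hg₀ : g₀ 0 = 0 := by simp [hg₀def]
  obtain ⟨f, hf⟩ := exists_linear_lift hρ hρ0 g₀ hg₀
  have hfmem : f ∈ latticeAut L := by
    intro x
    constructor
    · intro hx
      have h1 : (π x : T) = 0 := (Submodule.Quotient.mk_eq_zero L).2 hx
      have h2 := hf x
      rw [h1, hg₀] at h2
      exact (Submodule.Quotient.mk_eq_zero L).1 h2.symm
    · intro hx
      have h2 : (π (f x) : T) = 0 := (Submodule.Quotient.mk_eq_zero L).2 hx
      have h3 := hf x
      rw [h2] at h3
      have h4 : (π x : T) = 0 := g₀.injective (h3.trans hg₀.symm)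
      exact (Submodule.Quotient.mk_eq_zero L).1 h4
  refine ⟨(⟨f, hfmem⟩, g 0), ?_⟩
  apply IsometryEquiv.ext
  intro q
  obtain ⟨x, rfl⟩ := Submodule.Quotient.mk_surjective L q
  rw [Phi0_mk, ← hf x]
  simp [hg₀def]

/-- The candidate isomorphism. -/
noncomputable def Phi [DiscreteTopology L] :
    ↥(latticeAut L) × (EuclideanSpace ℝ (Fin n) ⧸ L) ≃
      ((EuclideanSpace ℝ (Fin n) ⧸ L) ≃ᵢ (EuclideanSpace ℝ (Fin n) ⧸ L)) :=
  Equiv.ofBijective Phi0 ⟨Phi0_injective, Phi0_surjective⟩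

lemma Phi_apply [DiscreteTopology L] (p : ↥(latticeAut L) × T) : Phi p = Phi0 p := rfl

variable (L) in
lemma finite_latticeAut [DiscreteTopology L] [IsZLattice ℝ L] : Finite ↥(latticeAut L) := by
  haveI := ZLattice.module_finite ℝ L
  haveI := ZLattice.module_free ℝ L
  classical
  set ι := Module.Free.ChooseBasisIndex ℤ L with hι
  set b : Module.Basis ι ℤ L := Module.Free.chooseBasis ℤ L with hb
  set R : ℝ := ∑ i : ι, ‖(b i : V)‖ with hR
  set s : Set V := (L : Set V) ∩ closedBall 0 R with hs
  have hscompact : IsCompact s := (isCompact_closedBall 0 R).inter_left (isClosed_lattice L)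
  haveI hsd : DiscreteTopology s := by
    haveI : DiscreteTopology (L : Set V) := ‹DiscreteTopology L›
    exact DiscreteTopology.of_subset ‹DiscreteTopology (L : Set V)› Set.inter_subset_left
  have hsfin : s.Finite := hscompact.finite (isDiscrete_iff_discreteTopology.mpr hsd)
  haveI := hsfin.to_subtype
  have hspan : Submodule.span ℝ (Set.range (fun i : ι => (b i : V))) = ⊤ := by
    have h1 : Submodule.span ℝ ((Submodule.span ℤ
        (Set.range (fun i : ι => (b i : V))) : Submodule ℤ V) : Set V) =
        Submodule.span ℝ (Set.range (fun i : ι => (b i : V))) :=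
      Submodule.span_span_of_tower ℤ ℝ _
    have h2 : Submodule.span ℤ (Set.range (fun i : ι => (b i : V))) = L := by
      have h3 : Set.range (fun i : ι => (b i : V)) = L.subtype '' (Set.range b) := by
        ext v
        simp [Set.range_comp, Submodule.coe_subtype]
      rw [h3, ← Submodule.map_span, b.span_eq, Submodule.map_top, Submodule.range_subtype]
    rw [h2] at h1
    rw [← h1, IsZLattice.span_top]
  apply Finite.of_injective (fun f : ↥(latticeAut L) =>
    (fun i => (⟨f.1 (b i), ⟨(mem_latticeAut.1 f.2 (b i)).1 (b i).2, by
      rw [mem_closedBall_zero_iff, f.1.norm_map]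
      exact Finset.single_le_sum (fun j _ => norm_nonneg ((b j : V))) (Finset.mem_univ i)⟩⟩ : s)
      : ι → s))
  intro f f' h
  have hi : ∀ i : ι, f.1 (b i) = f'.1 (b i) := by
    intro i
    have := congrFun h i
    exact congrArg Subtype.val this
  have hLM : (f.1.toLinearEquiv : V →ₗ[ℝ] V) = (f'.1.toLinearEquiv : V →ₗ[ℝ] V) := by
    apply LinearMap.ext_on hspan
    rintro x ⟨i, rfl⟩
    exact hi i
  have hff : f.1 = f'.1 := LinearIsometryEquiv.ext fun x => DFunLike.congr_fun hLM x
  exact Subtype.ext hff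

end FlatTorusProof


namespace FlatTorusProof

open Metric Submodule

variable {n : ℕ} {L : Submodule ℤ (EuclideanSpace ℝ (Fin n))}

local notation "V" => EuclideanSpace ℝ (Fin n)
local notation "T" => EuclideanSpace ℝ (Fin n) ⧸ L
local notation "π" => (Submodule.Quotient.mk : EuclideanSpace ℝ (Fin n) → EuclideanSpace ℝ (Fin n) ⧸ L)

lemma continuous_eval (q : T) : Continuous (fun g : T ≃ᵢ T => g q) :=
  (continuous_apply q).comp continuous_induced_dom

lemma Phi0_mk' (p : ↥(latticeAut L) × T) (x : V) :
    Phi0 p (π x) = π (p.1.1 x) + p.2 := Phi0_mk p.1 p.2 x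

lemma Phi0_zero' (p : ↥(latticeAut L) × T) : Phi0 p 0 = p.2 := Phi0_zero p.1 p.2

variable (L) in
lemma continuous_Phi0 [DiscreteTopology L] :
    Continuous (Phi0 : ↥(latticeAut L) × T → (T ≃ᵢ T)) := by
  haveI : DiscreteTopology ↥(latticeAut L) := ⟨rfl⟩
  apply continuous_induced_rng.2
  apply continuous_pi
  intro q
  obtain ⟨x, rfl⟩ := Submodule.Quotient.mk_surjective L q
  have heq : (fun p : ↥(latticeAut L) × T => ((fun g : T ≃ᵢ T => (g : T → T)) ∘ Phi0) p (π x))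
      = fun p : ↥(latticeAut L) × T => π (p.1.1 x) + p.2 :=
    funext fun p => Phi0_mk p.1 p.2 x
  rw [heq]
  exact Continuous.add
    ((continuous_of_discreteTopology
      (f := fun f : ↥(latticeAut L) => (π (f.1 x) : T))).comp continuous_fst)
    continuous_snd

variable (L) in
lemma continuous_Phi_symm [DiscreteTopology L] [IsZLattice ℝ L] :
    Continuous (Phi : ↥(latticeAut L) × T ≃ (T ≃ᵢ T)).symm := by
  classical
  haveI : DiscreteTopology ↥(latticeAut L) := ⟨rfl⟩
  haveI : Finite ↥(latticeAut L) := finite_latticeAut L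
  have hev0 : ∀ g : T ≃ᵢ T, ((Phi (L := L)).symm g).2 = g 0 := by
    intro g
    conv_rhs => rw [← (Phi (L := L)).apply_symm_apply g]
    exact (Phi0_zero' ((Phi (L := L)).symm g)).symm
  have hdiff : ∀ (g : T ≃ᵢ T) (x : V),
      g (π x) - g 0 = π (((Phi (L := L)).symm g).1.1 x) := by
    intro g x
    conv_lhs => rw [← (Phi (L := L)).apply_symm_apply g]
    rw [Phi_apply, Phi0_mk', Phi0_zero']
    abel
  have hc2 : Continuous fun g : T ≃ᵢ T => ((Phi (L := L)).symm g).2 := by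
    have : (fun g : T ≃ᵢ T => ((Phi (L := L)).symm g).2) = fun g : T ≃ᵢ T => g 0 :=
      funext hev0
    rw [this]
    exact continuous_eval 0
  have hc1 : Continuous fun g : T ≃ᵢ T => ((Phi (L := L)).symm g).1 := by
    rw [continuous_discrete_rng]
    intro f₀
    have hw : ∀ f' : ↥(latticeAut L), f' ≠ f₀ → ∃ x : V, (π (f₀.1 x) : T) ≠ π (f'.1 x) := by
      intro f' hne
      by_contra hcon
      push_neg at hcon
      exact hne (Subtype.ext (lin_eq_of_mk_eq hcon)).symm
    choose w hwspec using hw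
    have hPre : (fun g : T ≃ᵢ T => ((Phi (L := L)).symm g).1) ⁻¹' {f₀} =
        ⋂ (f' : ↥(latticeAut L)), (if h : f' = f₀ then Set.univ
          else {g : T ≃ᵢ T | g (π (w f' h)) - g 0 ≠ π (f'.1 (w f' h))}) := by
      ext g
      simp only [Set.mem_preimage, Set.mem_singleton_iff, Set.mem_iInter]
      constructor
      · intro hg f'
        by_cases h : f' = f₀
        · simp [h]
        · rw [dif_neg h]
          simp only [Set.mem_setOf_eq]
          rw [hdiff g (w f' h), hg]
          exact hwspec f' h
      · intro hg
        by_contra hne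
        have h1 := hg ((Phi (L := L)).symm g).1
        rw [dif_neg hne] at h1
        simp only [Set.mem_setOf_eq] at h1
        exact h1 (hdiff g _)
    rw [hPre]
    apply isOpen_iInter_of_finite
    intro f'
    by_cases h : f' = f₀
    · rw [dif_pos h]; exact isOpen_univ
    · rw [dif_neg h]
      have hcont : Continuous fun g : T ≃ᵢ T => g (π (w f' h)) - g 0 :=
        (continuous_eval _).sub (continuous_eval 0)
      exact (isOpen_ne_torus _).preimage hcont
  exact hc1.prodMk hc2

end FlatTorusProof


/-- The isometry group of a flat torus `T = ℝⁿ / L` is isomorphic,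
as a topological group, to the semidirect product `F ⋉ T`, where
`F = Oₙ(ℝ) ∩ Aut(L)` is the finite group of orthogonal maps preserving `L`, acting on
`T` via the induced maps, and `T` acts by translations.  The isomorphism is given
explicitly: `Φ (f, t)` is the isometry `[x] ↦ [f x] + t`, `Φ` intertwines composition
of isometries with the semidirect product multiplication
`(f₁, t₁)·(f₂, t₂) = (f₁ f₂, t₁ + f₁·t₂)`, and `Φ` is a homeomorphism (where `F`
carries the discrete topology and `T` its quotient topology). -/
theorem isometry_group_of_flat_torus_eq_semidirect_product
    {n : ℕ} (L : Submodule ℤ (EuclideanSpace ℝ (Fin n)))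
    [DiscreteTopology L] [IsZLattice ℝ L] :
    Finite ↥(latticeAut L) ∧
    ∃ Φ : ↥(latticeAut L) × (EuclideanSpace ℝ (Fin n) ⧸ L) ≃
        ((EuclideanSpace ℝ (Fin n) ⧸ L) ≃ᵢ (EuclideanSpace ℝ (Fin n) ⧸ L)),
      (∀ (f : ↥(latticeAut L)) (t : EuclideanSpace ℝ (Fin n) ⧸ L)
          (x : EuclideanSpace ℝ (Fin n)),
          Φ (f, t) (Submodule.Quotient.mk x) = Submodule.Quotient.mk (f.1 x) + t) ∧
      (∀ (f₁ f₂ : ↥(latticeAut L)) (t₁ t₂ : EuclideanSpace ℝ (Fin n) ⧸ L),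
          Φ (f₁, t₁) * Φ (f₂, t₂) =
            Φ (f₁ * f₂,
              t₁ + inducedTorusMap L f₁.1 (fun x hx => (mem_latticeAut.1 f₁.2 x).1 hx) t₂)) ∧
      Continuous Φ ∧ Continuous Φ.symm := by
  classical
  haveI : DiscreteTopology ↥(latticeAut L) := ⟨rfl⟩
  refine ⟨FlatTorusProof.finite_latticeAut L, FlatTorusProof.Phi, ?_, ?_, ?_, ?_⟩
  · intro f t x
    exact FlatTorusProof.Phi0_mk f t x
  · intro f₁ f₂ t₁ t₂
    apply IsometryEquiv.ext
    intro q
    obtain ⟨x, rfl⟩ := Submodule.Quotient.mk_surjective L q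
    obtain ⟨z, rfl⟩ := Submodule.Quotient.mk_surjective L t₂
    rw [IsometryEquiv.mul_apply]
    rw [FlatTorusProof.Phi_apply, FlatTorusProof.Phi_apply, FlatTorusProof.Phi_apply]
    rw [FlatTorusProof.Phi0_mk]
    rw [← Submodule.Quotient.mk_add]
    rw [FlatTorusProof.Phi0_mk, FlatTorusProof.Phi0_mk]
    have hind : inducedTorusMap L f₁.1 (fun x hx => (mem_latticeAut.1 f₁.2 x).1 hx)
        (Submodule.Quotient.mk z) = Submodule.Quotient.mk (f₁.1 z) := by
      simp [inducedTorusMap, Submodule.mapQ_apply]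
      rfl
    rw [hind]
    have hmul : (f₁ * f₂).1 x = f₁.1 (f₂.1 x) := rfl
    rw [hmul, map_add, Submodule.Quotient.mk_add]
    abel
  · exact FlatTorusProof.continuous_Phi0 L
  · exact FlatTorusProof.continuous_Phi_symm L
end

section
/- Let G be a compact Lie group and let Γ ≤ G be a finitely generated, virtually abelian subgroup. Then the translation action of Γ on G (γ · g = γg) is residually finite: for every finite F ⊆ Γ and every ε > 0 (with respect to a compatible metric d on G) there exist a finite set E, an action of Γ on E, and a map ζ : E → G such that d(ζ(f·e), f·ζ(e)) < ε for all f ∈ F, e ∈ E, and ζ(E) is ε-dense in G. -/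
open Metric DirectSum
set_option maxHeartbeats 1000000
set_option linter.unusedSectionVars false

section DD
variable {G : Type*} [Group G] [MetricSpace G] [IsTopologicalGroup G] [CompactSpace G]

noncomputable def dd (x y : G) : ℝ := ⨆ p : G × G, dist (p.1 * x * p.2) (p.1 * y * p.2)

variable (x y z : G)

lemma dd_bddAbove (x y : G) :
    BddAbove (Set.range fun p : G × G => dist (p.1 * x * p.2) (p.1 * y * p.2)) := by
  obtain ⟨C, hC⟩ := Metric.isBounded_iff.mp (isCompact_univ : IsCompact (Set.univ : Set G)).isBounded
  exact ⟨C, by rintro r ⟨p, rfl⟩; exact hC (Set.mem_univ _) (Set.mem_univ _)⟩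

lemma le_dd (x y : G) : dist x y ≤ dd x y := by
  have := le_ciSup (dd_bddAbove x y) ((1 : G), (1 : G))
  simpa [dd] using this

lemma dd_le {x y : G} {C : ℝ} (h : ∀ a b : G, dist (a * x * b) (a * y * b) ≤ C) :
    dd x y ≤ C :=
  ciSup_le fun p => h p.1 p.2

lemma dd_nonneg (x y : G) : 0 ≤ dd x y := dist_nonneg.trans (le_dd x y)

lemma dd_term_le (x y a b : G) : dist (a * x * b) (a * y * b) ≤ dd x y :=
  le_ciSup (dd_bddAbove x y) (a, b)

lemma dd_symm (x y : G) : dd x y = dd y x := by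
  unfold dd; exact iSup_congr fun p => dist_comm _ _

lemma dd_triangle (x y z : G) : dd x z ≤ dd x y + dd y z :=
  ciSup_le fun p => (dist_triangle _ (p.1 * y * p.2) _).trans
    (add_le_add (dd_term_le x y p.1 p.2) (dd_term_le y z p.1 p.2))

lemma dd_mul_left (g x y : G) : dd (g * x) (g * y) = dd x y := by
  have key : ∀ h u v : G, dd (h * u) (h * v) ≤ dd u v := by
    intro h u v
    refine ciSup_le fun p => ?_
    have := dd_term_le u v (p.1 * h) p.2
    simpa [mul_assoc] using this
  refine le_antisymm (key g x y) ?_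
  have := key g⁻¹ (g * x) (g * y)
  simpa using this

lemma dd_mul_right (x y g : G) : dd (x * g) (y * g) = dd x y := by
  have key : ∀ h u v : G, dd (u * h) (v * h) ≤ dd u v := by
    intro h u v
    refine ciSup_le fun p => ?_
    have := dd_term_le u v p.1 (h * p.2)
    simpa [mul_assoc] using this
  refine le_antisymm (key g x y) ?_
  have := key g⁻¹ (x * g) (y * g)
  simpa using this

lemma dd_mul_right_one (w z : G) : dd (w * z) z = dd w 1 := by
  have := dd_mul_right w 1 z
  simpa using this

lemma dd_inv_one (u : G) : dd u⁻¹ 1 = dd u 1 := by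
  have h := dd_mul_right u⁻¹ 1 u
  simpa [dd_symm u 1] using h.symm

lemma dd_mul_one_le (u v : G) : dd (u * v) 1 ≤ dd u 1 + dd v 1 := by
  have h1 : dd (u * v) v = dd u 1 := dd_mul_right_one u v
  have h2 := dd_triangle (u * v) v 1
  rw [h1] at h2
  exact h2

lemma dd_one_one : dd (1 : G) 1 = 0 :=
  le_antisymm (dd_le fun a b => by simp) (dd_nonneg _ _)

lemma dd_pow_le (g : G) (s : ℕ) : dd (g ^ s) 1 ≤ s * dd g 1 := by
  induction s with
  | zero => simp [dd_one_one]
  | succ n ih =>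
      have := (dd_mul_one_le (g ^ n) g).trans (add_le_add_left ih _)
      rw [← pow_succ] at this
      refine this.trans ?_
      push_cast; ring_nf; exact le_refl _

lemma dd_zpow_le (g : G) (u : ℤ) : dd (g ^ u) 1 ≤ u.natAbs * dd g 1 := by
  cases u with
  | ofNat n => simpa using dd_pow_le g n
  | negSucc n =>
      rw [zpow_negSucc, dd_inv_one]
      simpa using dd_pow_le g (n + 1)

lemma dd_small : ∀ θ : ℝ, 0 < θ → ∃ η : ℝ, 0 < η ∧
    ∀ x y : G, dist x y < η → dd x y ≤ θ := by
  intro θ hθ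
  set f : (G × G) × G × G → ℝ := fun p => dist (p.1.1 * p.2.1 * p.1.2) (p.1.1 * p.2.2 * p.1.2)
    with hf
  have hcont : Continuous f := by fun_prop
  have huc : UniformContinuous f := CompactSpace.uniformContinuous_of_continuous hcont
  obtain ⟨η, hη, hδ⟩ := Metric.uniformContinuous_iff.mp huc θ hθ
  refine ⟨η, hη, fun x y hxy => ?_⟩
  refine dd_le fun a b => ?_
  have key : dist (((a, b), (x, y)) : (G × G) × G × G) ((a, b), (y, y)) < η := by
    simp only [Prod.dist_eq, dist_self]
    simp [max_lt_iff, hxy, hη]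
  have := hδ key
  rw [hf] at this
  simp only [Real.dist_eq] at this
  have h0 : dist (a * y * b) (a * y * b) = 0 := dist_self _
  calc dist (a * x * b) (a * y * b)
      = |dist (a * x * b) (a * y * b) - dist (a * y * b) (a * y * b)| := by
        rw [h0, sub_zero, abs_of_nonneg dist_nonneg]
    _ ≤ θ := this.le

-- simultaneous recurrence
lemma dd_recurrence {k : ℕ} (gs : Fin k → G) (M : ℕ) (θ : ℝ) (hθ : 0 < θ) :
    ∃ n : ℕ, M < n ∧ ∀ i, dd (gs i ^ n) 1 ≤ θ := by
  obtain ⟨η, hη, hsm⟩ := dd_small (G := G) θ hθ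
  set L : ℕ := M + 1 with hL
  set seq : ℕ → (Fin k → G) := fun m i => gs i ^ ((m + 1) * L) with hseq
  obtain ⟨x, -, φ, hmono, hconv⟩ :=
    (isCompact_univ : IsCompact (Set.univ : Set (Fin k → G))).tendsto_subseq
      (fun n => Set.mem_univ (seq n))
  obtain ⟨N, hN⟩ := (Metric.tendsto_atTop.mp hconv) (η / 2) (by linarith)
  set p : ℕ := φ N with hp
  set q : ℕ := φ (N + 1) with hq
  have hpq : p < q := hmono (Nat.lt_succ_self N)
  have hd : dist (seq p) (seq q) < η := by
    have h1 := hN N le_rfl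
    have h2 := hN (N + 1) (Nat.le_succ N)
    calc dist (seq p) (seq q) ≤ dist (seq p) x + dist x (seq q) := dist_triangle _ _ _
      _ < η / 2 + η / 2 := by rw [dist_comm x]; exact add_lt_add h1 h2
      _ = η := by ring
  refine ⟨(q - p) * L, ?_, fun i => ?_⟩
  · have : 1 ≤ q - p := by omega
    calc M < L := Nat.lt_succ_self M
      _ ≤ (q - p) * L := Nat.le_mul_of_pos_left L (by omega)
  · have hco : dist (gs i ^ ((p + 1) * L)) (gs i ^ ((q + 1) * L)) < η :=
      lt_of_le_of_lt (dist_le_pi_dist (seq p) (seq q) i) hd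
    have hdd : dd (gs i ^ ((p + 1) * L)) (gs i ^ ((q + 1) * L)) ≤ θ := by
      have := hsm _ _ hco
      exact this
    have hsplit : gs i ^ ((q + 1) * L) = gs i ^ ((q - p) * L) * gs i ^ ((p + 1) * L) := by
      rw [← pow_add, ← add_mul]
      congr 2
      omega
    rw [dd_symm, hsplit] at hdd
    · rw [← dd_mul_right (gs i ^ ((q - p) * L)) 1 (gs i ^ ((p + 1) * L)), one_mul]
      exact hdd
      

lemma perm_transport {H : Type*} [Group H] {E : Type*} [Finite E] (ρ : H →* Equiv.Perm E) :
    ∃ (E' : Type) (_ : Finite E') (ρ' : H →* Equiv.Perm E') (θ : E' → E),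
      Function.Surjective θ ∧ ∀ (a : H) (e : E'), θ (ρ' a e) = ρ a (θ e) := by
  obtain ⟨N, ⟨eqv⟩⟩ := Finite.exists_equiv_fin E
  refine ⟨Fin N, inferInstance,
    MonoidHom.mk' (fun a => (eqv.symm.trans (ρ a)).trans eqv) ?_,
    fun e => eqv.symm e, eqv.symm.surjective, ?_⟩
  · intro a b
    apply Equiv.ext
    intro x
    simp [map_mul]
  · intro a e
    simp

lemma abl_core {H : Type*} [CommGroup H] {k : ℕ} {T : Type*} [AddCommGroup T] [Finite T]
    (φ : Additive H ≃+ (Fin k →₀ ℤ) × T) (ι : H →* G)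
    (F' : Set H) (hF' : F'.Finite) (δ : ℝ) (hδ : 0 < δ) :
    ∃ (E : Type) (_ : Finite E) (ρ : H →* Equiv.Perm E) (ζ : E → G),
      (∀ a ∈ F', ∀ e, dd (ζ (ρ a e)) (ι a * ζ e) ≤ δ) ∧
      (∀ g : G, ∃ e, dd g (ζ e) ≤ δ) := by
  classical
  -- the fundamental "additive-to-multiplicative" map
  set Φ : (Fin k →₀ ℤ) × T → G := fun v => ι (Additive.toMul (φ.symm v)) with hΦ
  have Φadd : ∀ v w, Φ (v + w) = Φ v * Φ w := by
    intro v w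
    simp only [hΦ, map_add, toMul_add, map_mul]
  have Φzero : Φ 0 = 1 := by
    simp only [hΦ, map_zero, toMul_zero, map_one]
  have Φiota : ∀ a : H, ι a = Φ (φ (Additive.ofMul a)) := by
    intro a
    simp only [hΦ, AddEquiv.symm_apply_apply]
    rfl
  have Φzpow : ∀ (z : ℤ) (w), Φ (z • w) = Φ w ^ z := by
    intro z w
    set Ψ : Multiplicative ((Fin k →₀ ℤ) × T) →* G :=
      MonoidHom.mk' (fun v => Φ v.toAdd) (fun a b => Φadd _ _) with hΨ
    have h1 : Φ (z • w) = Ψ (Multiplicative.ofAdd (z • w)) := rfl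
    rw [h1, ofAdd_zsmul, map_zpow]
    rfl
  -- generators of the free part
  set bb : Fin k → G := fun i => Φ (Finsupp.single i 1, 0) with hbb
  -- bound on exponents appearing in F'
  set N₀ : ℕ := hF'.toFinset.sup
    (fun a => Finset.univ.sup fun i : Fin k => ((φ (Additive.ofMul a)).1 i).natAbs) with hN₀
  set θ : ℝ := δ / (2 * k + 1) with hθdef
  have hθ : 0 < θ := by positivity
  obtain ⟨n, hn, hrec⟩ := dd_recurrence bb N₀ θ hθ
  haveI : NeZero n := ⟨by omega⟩
  -- the finite net
  obtain ⟨η, hη, hsmall⟩ := dd_small (G := G) δ hδ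
  obtain ⟨t, htf, htcov⟩ :=
    Metric.totallyBounded_iff.mp (isCompact_univ : IsCompact (Set.univ : Set G)).totallyBounded η hη
  haveI := htf.to_subtype
  -- the finite model
  set χ : H → (Fin k → ZMod n) × T := fun a =>
    ((fun i => (((φ (Additive.ofMul a)).1 i : ℤ) : ZMod n)), (φ (Additive.ofMul a)).2) with hχ
  have χadd : ∀ a b : H, χ (a * b) = χ a + χ b := by
    intro a b
    have h : φ (Additive.ofMul (a * b)) = φ (Additive.ofMul a) + φ (Additive.ofMul b) := by
      rw [ofMul_mul, map_add]
    ext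
    · simp [hχ, h, Finsupp.add_apply, Prod.fst_add, Pi.add_apply, Int.cast_add]
    · simp [hχ, h, Prod.snd_add]
  set ρ₀ : H →* Equiv.Perm (((Fin k → ZMod n) × T) × ↥t) := MonoidHom.mk'
      (fun a => Equiv.prodCongr (Equiv.addLeft (χ a)) (Equiv.refl ↥t))
      (by
        intro a b
        apply Equiv.ext
        rintro ⟨c, x⟩
        show ((χ (a * b) + c, x) : ((Fin k → ZMod n) × T) × ↥t) = (χ a + (χ b + c), x)
        rw [χadd, add_assoc]) with hρ₀
  have ρ₀app : ∀ (a : H) (c : (Fin k → ZMod n) × T) (x : ↥t), ρ₀ a ⟨c, x⟩ = ⟨χ a + c, x⟩ :=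
    fun a c x => rfl
  set lift : (Fin k → ZMod n) → (Fin k →₀ ℤ) :=
    fun c => Finsupp.equivFunOnFinite.symm (fun i => ((c i).val : ℤ)) with hlift
  have lift_apply : ∀ (c : Fin k → ZMod n) (i : Fin k), lift c i = ((c i).val : ℤ) := by
    intro c i
    simp [hlift]
  set ζ₀ : ((Fin k → ZMod n) × T) × ↥t → G := fun e => Φ (lift e.1.1, e.1.2) * (e.2 : G) with hζ₀
  have hequiv : ∀ a ∈ F', ∀ e : ((Fin k → ZMod n) × T) × ↥t, dd (ζ₀ (ρ₀ a e)) (ι a * ζ₀ e) ≤ δ := by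
    rintro a ha ⟨⟨c, t'⟩, x⟩
    rw [ρ₀app]
    show dd (Φ (lift ((χ a).1 + c), (χ a).2 + t') * (x : G))
        (ι a * (Φ (lift c, t') * (x : G))) ≤ δ
    set va : Fin k →₀ ℤ := (φ (Additive.ofMul a)).1 with hva
    set τa : T := (φ (Additive.ofMul a)).2 with hτa
    have hχa : χ a = ((fun i => ((va i : ℤ) : ZMod n)), τa) := rfl
    -- the defect
    set mm : Fin k →₀ ℤ := lift ((χ a).1 + c) - (va + lift c) with hmm
    have hsp : (lift ((χ a).1 + c), (χ a).2 + t') =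
        ((mm, 0) : (Fin k →₀ ℤ) × T) + (va + lift c, τa + t') := by
      have h1 : (χ a).2 = τa := rfl
      rw [Prod.mk_add_mk]
      rw [h1, hmm]
      rw [sub_add_cancel, zero_add]
    have step1 : Φ (lift ((χ a).1 + c), (χ a).2 + t') =
        Φ (mm, 0) * Φ (va + lift c, τa + t') := by rw [hsp, Φadd]
    have step2 : ι a * (Φ (lift c, t') * ↑x) = Φ (va + lift c, τa + t') * ↑x := by
      rw [Φiota a, ← mul_assoc, ← Φadd]
      rfl
    rw [step1, step2, mul_assoc]
    rw [dd_mul_right_one]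
    -- now estimate dd (Φ (mm, 0)) 1
    -- divisibility and size
    have hdvd : ∀ i, (n : ℤ) ∣ mm i := by
      intro i
      have : ((mm i : ℤ) : ZMod n) = 0 := by
        have h2 : mm i = ((((χ a).1 + c) i).val : ℤ) - (va i + ((c i).val : ℤ)) := by
          rw [hmm]
          simp [lift_apply]
        rw [h2]
        push_cast
        rw [ZMod.natCast_rightInverse _]
        have h3 : ((χ a).1 + c) i = ((va i : ℤ) : ZMod n) + c i := rfl
        rw [h3]
        rw [ZMod.natCast_rightInverse _]
        ring
      exact (ZMod.intCast_zmod_eq_zero_iff_dvd _ _).mp this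
    have hbound : ∀ i, (mm i).natAbs ≤ 2 * n := by
      intro i
      have h2 : mm i = ((((χ a).1 + c) i).val : ℤ) - (va i + ((c i).val : ℤ)) := by
        rw [hmm]; simp [lift_apply]
      have hv1 : (((χ a).1 + c) i).val < n := ZMod.val_lt _
      have hv2 : (c i).val < n := ZMod.val_lt _
      have hv3 : (va i).natAbs ≤ N₀ := by
        have m1 : a ∈ hF'.toFinset := hF'.mem_toFinset.mpr ha
        rw [hva]
        refine le_trans (Finset.le_sup
          (f := fun i : Fin k => ((φ (Additive.ofMul a)).1 i).natAbs) (Finset.mem_univ i)) ?_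
        exact Finset.le_sup (f := fun a : H =>
          Finset.univ.sup fun i : Fin k => ((φ (Additive.ofMul a)).1 i).natAbs) m1
      omega
    -- mm as a sum of singles
    have hmsum : (mm : Fin k →₀ ℤ) = ∑ i : Fin k, Finsupp.single i (mm i) :=
      (Finsupp.univ_sum_single mm).symm
    have key : ∀ s : Finset (Fin k), ∀ f : Fin k → (Fin k →₀ ℤ),
        dd (Φ (∑ i ∈ s, f i, 0)) 1 ≤ ∑ i ∈ s, dd (Φ (f i, 0)) 1 := by
      intro s
      induction s using Finset.induction with
      | empty => intro f; simp only [Finset.sum_empty]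
                 rw [show ((0 : Fin k →₀ ℤ), (0 : T)) = (0 : (Fin k →₀ ℤ) × T) from rfl, Φzero,
                   dd_one_one]
      | @insert j s hj ih =>
          intro f
          rw [Finset.sum_insert hj, Finset.sum_insert hj]
          have hh : ((f j + ∑ i ∈ s, f i, (0 : T)) : (Fin k →₀ ℤ) × T)
              = (f j, 0) + (∑ i ∈ s, f i, 0) := by rw [Prod.mk_add_mk, add_zero]
          rw [hh, Φadd]
          exact (dd_mul_one_le _ _).trans (add_le_add le_rfl (ih f))
    have hsingle_bound : ∀ i : Fin k, dd (Φ (Finsupp.single i (mm i), 0)) 1 ≤ 2 * θ := by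
      intro i
      obtain ⟨u, hu⟩ := hdvd i
      have hsm : (Finsupp.single i (mm i), (0 : T))
          = (mm i) • ((Finsupp.single i 1, 0) : (Fin k →₀ ℤ) × T) := by
        rw [Prod.smul_mk, smul_zero, Finsupp.smul_single, smul_eq_mul, mul_one]
      have h1 : Φ (Finsupp.single i (mm i), 0) = bb i ^ (mm i) := by
        rw [hsm, Φzpow]
      have h2 : bb i ^ (mm i) = (bb i ^ (n : ℤ)) ^ u := by
        rw [← zpow_mul, ← hu]
      have h3 : dd ((bb i ^ (n : ℤ)) ^ u) 1 ≤ u.natAbs * dd (bb i ^ (n : ℤ)) 1 :=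
        dd_zpow_le _ _
      have h4 : dd (bb i ^ (n : ℤ)) 1 ≤ θ := by
        rw [zpow_natCast]; exact hrec i
      have h5 : u.natAbs ≤ 2 := by
        have hb := hbound i
        have hn0 : 0 < n := Nat.pos_of_ne_zero (NeZero.ne n)
        rw [hu, Int.natAbs_mul, Int.natAbs_natCast] at hb
        rw [Nat.mul_comm 2 n] at hb
        exact Nat.le_of_mul_le_mul_left hb hn0
      rw [h1, h2]
      calc dd ((bb i ^ (n : ℤ)) ^ u) 1 ≤ u.natAbs * dd (bb i ^ (n : ℤ)) 1 := h3
        _ ≤ 2 * θ := by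
            have hddnn : 0 ≤ dd (bb i ^ (n : ℤ)) 1 := dist_nonneg.trans (le_dd _ _)
            have : (u.natAbs : ℝ) ≤ 2 := by exact_mod_cast h5
            nlinarith [h4]
    calc dd (Φ (mm, 0)) 1 = dd (Φ (∑ i : Fin k, Finsupp.single i (mm i), 0)) 1 := by rw [← hmsum]
      _ ≤ ∑ i : Fin k, dd (Φ (Finsupp.single i (mm i), 0)) 1 := key Finset.univ _
      _ ≤ ∑ _i : Fin k, (2 * θ) := Finset.sum_le_sum fun i _ => hsingle_bound i
      _ = k * (2 * θ) := by rw [Finset.sum_const, Finset.card_univ, Fintype.card_fin,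
          nsmul_eq_mul]
      _ ≤ δ := by
          have h2k : (0:ℝ) < 2 * k + 1 := by positivity
          have hre : (k:ℝ) * (2 * (δ / (2 * k + 1))) = 2 * k * δ / (2 * k + 1) := by ring
          rw [hθdef, hre, div_le_iff₀ h2k]
          nlinarith [hδ.le]
  have hdens : ∀ g : G, ∃ e : ((Fin k → ZMod n) × T) × ↥t, dd g (ζ₀ e) ≤ δ := by
    intro g
    have hg : g ∈ ⋃ y ∈ t, Metric.ball y η := htcov (Set.mem_univ g)
    simp only [Set.mem_iUnion] at hg
    obtain ⟨x, hx, hgx⟩ := hg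
    refine ⟨((0, 0), ⟨x, hx⟩), ?_⟩
    have hz : lift (0 : Fin k → ZMod n) = 0 := by
      ext i
      rw [lift_apply]
      simp
    have : Φ (lift (0 : Fin k → ZMod n), (0 : T)) = 1 := by rw [hz]; exact Φzero
    show dd g (Φ (lift (0 : Fin k → ZMod n), (0 : T)) * (x : G)) ≤ δ
    rw [this, one_mul]
    exact hsmall _ _ (Metric.mem_ball.mp hgx)
  obtain ⟨E, fE, ρ, θm, hsurj, hcomm⟩ := perm_transport ρ₀
  refine ⟨E, fE, ρ, ζ₀ ∘ θm, fun a ha e => ?_, fun g => ?_⟩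
  · have := hequiv a ha (θm e)
    simpa [Function.comp, hcomm a e] using this
  · obtain ⟨e₀, he⟩ := hdens g
    obtain ⟨e, rfl⟩ := hsurj e₀
    exact ⟨e, he⟩


lemma abelian_lemma {H : Type*} [Group H] (hcomm : ∀ a b : H, a * b = b * a)
    (hfg : Group.FG H) (ι : H →* G) (F' : Set H) (hF' : F'.Finite) (δ : ℝ) (hδ : 0 < δ) :
    ∃ (E : Type) (_ : Finite E) (ρ : H →* Equiv.Perm E) (ζ : E → G),
      (∀ a ∈ F', ∀ e, dd (ζ (ρ a e)) (ι a * ζ e) ≤ δ) ∧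
      (∀ g : G, ∃ e, dd g (ζ e) ≤ δ) := by
  letI : CommGroup H := { (inferInstance : Group H) with mul_comm := hcomm }
  haveI : AddGroup.FG (Additive H) := GroupFG.iff_add_fg.mp hfg
  obtain ⟨k, T0, fT0, pp, hpp, ee, ⟨φ0⟩⟩ :=
    AddCommGroup.equiv_free_prod_directSum_zmod (Additive H)
  haveI : ∀ i : T0, NeZero (pp i ^ ee i) := fun i => ⟨pow_ne_zero _ (hpp i).ne_zero⟩
  haveI : Finite (⨁ i : T0, ZMod (pp i ^ ee i)) :=
    Finite.of_equiv _ DFinsupp.equivFunOnFintype.symm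
  exact abl_core φ0 ι F' hF' δ hδ

end DD

/-- Let `G` be a compact Lie group (a compact topological group with
a smooth manifold structure modelled on some `EuclideanSpace ℝ (Fin m)`, equipped with
a compatible metric) and let `Γ ≤ G` be a finitely generated, virtually abelian
subgroup. Then the translation action of `Γ` on `G` is residually finite. -/
theorem translation_action_on_compact_lie_group_residually_finite
    {m : ℕ} {G : Type*} [Group G] [MetricSpace G] [IsTopologicalGroup G]
    [CompactSpace G] [ChartedSpace (EuclideanSpace ℝ (Fin m)) G]
    [LieGroup (modelWithCornersSelf ℝ (EuclideanSpace ℝ (Fin m))) (⊤ : ℕ∞) G]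
    (Γ : Subgroup G) (hfg : Group.FG ↥Γ)
    (hva : ∃ A : Subgroup ↥Γ, A.FiniteIndex ∧ ∀ a b : ↥A, a * b = b * a) :
    ∀ (F : Finset ↥Γ) (ε : ℝ), 0 < ε →
      ∃ (E : Type) (_ : Finite E) (ρ : ↥Γ →* Equiv.Perm E) (ζ : E → G),
        (∀ f ∈ F, ∀ e : E, dist (ζ (ρ f e)) ((f : G) * ζ e) < ε) ∧
        ∀ g : G, ∃ e : E, dist g (ζ e) ≤ ε := by
  intro F ε hε
  obtain ⟨A, hAfi, hAcomm⟩ := hva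
  haveI := hfg
  haveI := hAfi
  have hAfg : Group.FG ↥A := Subgroup.fg_of_index_ne_zero A
  set ι : ↥A →* G := Γ.subtype.comp A.subtype with hι
  haveI : Finite (↥Γ ⧸ A) := Subgroup.finite_quotient_of_finiteIndex (H := A)
  -- the cocycle
  have cmem : ∀ (γ : ↥Γ) (q : ↥Γ ⧸ A), (γ • q).out⁻¹ * (γ * q.out) ∈ A := by
    intro γ q
    have h1 : (QuotientGroup.mk ((γ • q).out) : ↥Γ ⧸ A) = QuotientGroup.mk (γ * q.out) := by
      rw [QuotientGroup.out_eq']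
      have : (QuotientGroup.mk (γ * q.out) : ↥Γ ⧸ A) = γ • QuotientGroup.mk q.out := rfl
      rw [this, QuotientGroup.out_eq']
    exact QuotientGroup.eq.mp h1
  set coc : ↥Γ → (↥Γ ⧸ A) → ↥A := fun γ q => ⟨(γ • q).out⁻¹ * (γ * q.out), cmem γ q⟩
    with hcoc
  have coc_one : ∀ q, coc 1 q = 1 := by
    intro q
    apply Subtype.ext
    simp [hcoc]
  have coc_mul : ∀ (γ δ : ↥Γ) (q), coc (γ * δ) q = coc γ (δ • q) * coc δ q := by
    intro γ δ q
    apply Subtype.ext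
    show ((γ * δ) • q).out⁻¹ * (γ * δ * q.out)
      = ((γ • (δ • q)).out⁻¹ * (γ * (δ • q).out)) * ((δ • q).out⁻¹ * (δ * q.out))
    rw [mul_smul]
    group
  have coc_key : ∀ (γ : ↥Γ) (q), (γ • q).out * (coc γ q : ↥Γ) = γ * q.out := by
    intro γ q
    show (γ • q).out * ((γ • q).out⁻¹ * (γ * q.out)) = γ * q.out
    rw [mul_inv_cancel_left]
  -- the finite subset of A
  set F_A : Set ↥A := (fun p : ↥Γ × (↥Γ ⧸ A) => coc p.1 p.2) '' ((↑F : Set ↥Γ) ×ˢ Set.univ)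
    with hFA
  have hFAfin : F_A.Finite := (F.finite_toSet.prod Set.finite_univ).image _
  obtain ⟨E_A, fEA, ρ_A, ζ_A, hEq, hDen⟩ :=
    abelian_lemma hAcomm hAfg ι F_A hFAfin (ε / 2) (by linarith)
  -- induced action
  letI act : MulAction ↥Γ ((↥Γ ⧸ A) × E_A) :=
    { smul := fun γ p => (γ • p.1, ρ_A (coc γ p.1) p.2)
      one_smul := by
        rintro ⟨q, x⟩
        show (_ • q, ρ_A (coc 1 q) x) = (q, x)
        rw [coc_one, map_one, one_smul]
        rfl
      mul_smul := by
        rintro γ δ ⟨q, x⟩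
        show ((γ * δ) • q, ρ_A (coc (γ * δ) q) x)
          = (γ • (δ • q), ρ_A (coc γ (δ • q)) (ρ_A (coc δ q) x))
        rw [coc_mul, map_mul, mul_smul]
        rfl }
  set ρ₀ : ↥Γ →* Equiv.Perm ((↥Γ ⧸ A) × E_A) := MulAction.toPermHom ↥Γ ((↥Γ ⧸ A) × E_A)
    with hρ₀
  have ρ₀app : ∀ (γ : ↥Γ) (q : ↥Γ ⧸ A) (x : E_A),
      ρ₀ γ (q, x) = (γ • q, ρ_A (coc γ q) x) := fun γ q x => rfl
  set ζ₀ : (↥Γ ⧸ A) × E_A → G := fun p => ((p.1.out : ↥Γ) : G) * ζ_A p.2 with hζ₀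
  have hequiv : ∀ f ∈ F, ∀ e : (↥Γ ⧸ A) × E_A,
      dd (ζ₀ (ρ₀ f e)) (((f : ↥Γ) : G) * ζ₀ e) ≤ ε / 2 := by
    rintro f hf ⟨q, x⟩
    rw [ρ₀app]
    have hmem : coc f q ∈ F_A := ⟨(f, q), ⟨hf, Set.mem_univ q⟩, rfl⟩
    have hkey : ((f : ↥Γ) : G) * ζ₀ (q, x)
        = (((f • q).out : ↥Γ) : G) * (ι (coc f q) * ζ_A x) := by
      have h2 : ((f * q.out : ↥Γ) : G) = (((f • q).out * (coc f q : ↥Γ) : ↥Γ) : G) := by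
        rw [coc_key]
      show ((f : ↥Γ) : G) * (((q.out : ↥Γ) : G) * ζ_A x) = _
      rw [← mul_assoc, ← Subgroup.coe_mul, h2, Subgroup.coe_mul, mul_assoc]
      rfl
    rw [hkey]
    show dd ((((f • q).out : ↥Γ) : G) * ζ_A (ρ_A (coc f q) x)) _ ≤ ε / 2
    rw [dd_mul_left]
    exact hEq (coc f q) hmem x
  have hdens : ∀ g : G, ∃ e : (↥Γ ⧸ A) × E_A, dd g (ζ₀ e) ≤ ε / 2 := by
    intro g
    set q₁ : ↥Γ ⧸ A := QuotientGroup.mk 1 with hq₁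
    set a₀ : G := ((q₁.out : ↥Γ) : G) with ha₀
    obtain ⟨e, he⟩ := hDen (a₀⁻¹ * g)
    refine ⟨(q₁, e), ?_⟩
    show dd g (a₀ * ζ_A e) ≤ ε / 2
    calc dd g (a₀ * ζ_A e) = dd (a₀ * (a₀⁻¹ * g)) (a₀ * ζ_A e) := by
          rw [mul_inv_cancel_left]
      _ = dd (a₀⁻¹ * g) (ζ_A e) := dd_mul_left _ _ _
      _ ≤ ε / 2 := he
  obtain ⟨E, fE, ρ, θm, hsurj, hcomm⟩ := perm_transport ρ₀
  refine ⟨E, fE, ρ, ζ₀ ∘ θm, fun f hf e => ?_, fun g => ?_⟩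
  · have h1 := hequiv f hf (θm e)
    have h2 : dist (ζ₀ (ρ₀ f (θm e))) (((f : ↥Γ) : G) * ζ₀ (θm e)) ≤ ε / 2 :=
      (le_dd _ _).trans h1
    rw [Function.comp_apply, Function.comp_apply, hcomm f e]
    exact lt_of_le_of_lt h2 (by linarith)
  · obtain ⟨e₀, he⟩ := hdens g
    obtain ⟨e, rfl⟩ := hsurj e₀
    refine ⟨e, ?_⟩
    have h2 : dist g (ζ₀ (θm e)) ≤ ε / 2 := (le_dd _ _).trans he
    rw [Function.comp_apply]
    linarith
end

section
/- Let (X, d) be a Cantor set with a fixed metric, and let Γ be a finitely presented group. Suppose μ_i : Γ → Isom(X) are set maps (not necessarily homomorphisms) such that for all ε > 0 and every finite S ⊆ Γ there exists j such that d(μ_i(γδ)(x), μ_i(γ)(μ_i(δ)(x))) < ε for all x ∈ X, all γ, δ ∈ S, and all i ≥ j. Then there exist genuine group homomorphisms μ̃_i : Γ → Homeo(X) such that for all ε > 0 and every finite S ⊆ Γ there exists j with d(μ̃_i(γ)(x), μ_i(γ)(x)) < ε for all x ∈ X, γ ∈ S, and i ≥ j. -/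
open Function Metric

namespace AIA
variable {X : Type*} [MetricSpace X]

def chainRel (δ : ℝ) : X → X → Prop := Relation.ReflTransGen fun a b => dist a b < δ
theorem chainRel_refl (δ : ℝ) (x : X) : chainRel δ x x := Relation.ReflTransGen.refl
theorem chainRel_trans {δ : ℝ} {x y z : X} (h : chainRel δ x y) (h' : chainRel δ y z) :
    chainRel δ x z := Relation.ReflTransGen.trans h h'
theorem chainRel_symm {δ : ℝ} {x y : X} (h : chainRel δ x y) : chainRel δ y x :=
  by
    unfold chainRel at h ⊢
    induction h with
    | refl => exact Relation.ReflTransGen.refl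
    | tail _ hbc ih => exact Relation.ReflTransGen.head (by rwa [dist_comm] at hbc) ih
theorem chainRel_single {δ : ℝ} {x y : X} (h : dist x y < δ) : chainRel δ x y :=
  Relation.ReflTransGen.single h
def chainSetoid (δ : ℝ) : Setoid X :=
  ⟨chainRel δ, ⟨chainRel_refl δ, chainRel_symm, chainRel_trans⟩⟩
theorem chainRel_map {δ : ℝ} {f : X → X} (hf : Isometry f) {x y : X}
    (h : chainRel δ x y) : chainRel δ (f x) (f y) :=
  Relation.ReflTransGen.lift (r := fun a b : X => dist a b < δ) (p := fun a b : X => dist a b < δ) f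
    (fun a b (hab : dist a b < δ) => show dist (f a) (f b) < δ by rwa [hf.dist_eq]) x y h

/-- quotient by chain components -/
abbrev CQ (X : Type*) [MetricSpace X] (δ : ℝ) : Type _ := Quotient (chainSetoid (X := X) δ)

def cmk (δ : ℝ) (x : X) : CQ X δ := Quotient.mk (chainSetoid δ) x

theorem cmk_eq_of {δ : ℝ} {x y : X} (h : chainRel δ x y) : cmk δ x = cmk δ y :=
  Quotient.sound h

theorem chainRel_of_cmk_eq {δ : ℝ} {x y : X} (h : cmk δ x = cmk δ y) : chainRel δ x y :=
  Quotient.exact h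

theorem cmk_surjective (δ : ℝ) : Surjective (cmk (X := X) δ) :=
  Quotient.mk_surjective

/-- inverse of a surjective isometry is an isometry -/
theorem symm_isometry {f : X → X} (hf : Isometry f) (hs : Surjective f) :
    Isometry ⇑(Equiv.ofBijective f ⟨hf.injective, hs⟩).symm := by
  intro a b
  set e := Equiv.ofBijective f ⟨hf.injective, hs⟩
  have : ∀ u v : X, edist (f u) (f v) = edist u v := hf
  rw [← this (e.symm a) (e.symm b)]
  have h1 : f (e.symm a) = a := e.apply_symm_apply a
  have h2 : f (e.symm b) = b := e.apply_symm_apply b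
  rw [h1, h2]

theorem exists_perm (δ : ℝ) {f : X → X} (hf : Isometry f) (hs : Surjective f) :
    ∃ π : Equiv.Perm (CQ X δ), ∀ x, π (cmk δ x) = cmk δ (f x) := by
  set e := Equiv.ofBijective f ⟨hf.injective, hs⟩
  have hg : Isometry ⇑e.symm := symm_isometry hf hs
  refine ⟨{ toFun := Quotient.map f (fun a b h => chainRel_map hf h)
            invFun := Quotient.map ⇑e.symm (fun a b h => chainRel_map hg h)
            left_inv := ?_
            right_inv := ?_ }, fun x => rfl⟩
  · refine fun q => Quotient.inductionOn q (fun x => ?_)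
    show Quotient.mk _ (e.symm (f x)) = Quotient.mk _ x
    have : e.symm (f x) = x := e.symm_apply_apply x
    rw [this]
  · refine fun q => Quotient.inductionOn q (fun x => ?_)
    show Quotient.mk _ (f (e.symm x)) = Quotient.mk _ x
    have : f (e.symm x) = x := e.apply_symm_apply x
    rw [this]

/-- the subgroup of permutations of chain components induced by surjective isometries -/
def Hsub (X : Type*) [MetricSpace X] (δ : ℝ) : Subgroup (Equiv.Perm (CQ X δ)) where
  carrier := {π | ∃ f : X → X, Isometry f ∧ Surjective f ∧ ∀ x, π (cmk δ x) = cmk δ (f x)}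
  one_mem' := ⟨id, isometry_id, surjective_id, fun x => rfl⟩
  mul_mem' := by
    rintro π π' ⟨f, hf, hs, hr⟩ ⟨f', hf', hs', hr'⟩
    refine ⟨f ∘ f', hf.comp hf', hs.comp hs', fun x => ?_⟩
    show π (π' (cmk δ x)) = cmk δ (f (f' x))
    rw [hr', hr]
  inv_mem' := by
    rintro π ⟨f, hf, hs, hr⟩
    set e := Equiv.ofBijective f ⟨hf.injective, hs⟩
    refine ⟨⇑e.symm, symm_isometry hf hs, e.symm.surjective, fun x => ?_⟩
    have : π (cmk δ (e.symm x)) = cmk δ x := by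
      rw [hr]; congr 1; exact e.apply_symm_apply x
    rw [← this]; exact π.symm_apply_apply _


section Phi
variable {X : Type*} [MetricSpace X]

theorem isOpen_class (δ : ℝ) (hδ : 0 < δ) (q : CQ X δ) : IsOpen {y : X | cmk δ y = q} := by
  rw [Metric.isOpen_iff]
  intro y hy
  refine ⟨δ, hδ, fun z hz => ?_⟩
  have : cmk δ y = cmk δ z := cmk_eq_of (chainRel_single (by rw [dist_comm]; exact hz))
  simp only [Set.mem_setOf_eq] at hy ⊢
  rw [← this]; exact hy

theorem exists_Phi (δ : ℝ) (hδ : 0 < δ) :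
    ∃ Φ : Hsub X δ → X ≃ₜ X,
      (∀ π π' : Hsub X δ, Φ (π * π') = (Φ π').trans (Φ π)) ∧
      (∀ (π : Hsub X δ) (x : X), cmk δ (Φ π x) = (π : Equiv.Perm (CQ X δ)) (cmk δ x)) := by
  classical
  -- orbit setoid on CQ
  set oS : Setoid (CQ X δ) :=
    ⟨fun q q' => ∃ π : Hsub X δ, (π : Equiv.Perm (CQ X δ)) q = q',
     ⟨fun q => ⟨1, rfl⟩,
      fun {q q'} => by rintro ⟨π, hπ⟩; exact ⟨π⁻¹, by rw [← hπ]; simp⟩,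
      fun {q q' q''} => by
        rintro ⟨π, hπ⟩ ⟨π', hπ'⟩
        exact ⟨π' * π, by rw [← hπ', ← hπ]; simp⟩⟩⟩ with hoS
  set rep : CQ X δ → CQ X δ := fun q => (Quotient.mk oS q).out with hrepdef
  have hrep1 : ∀ q, ∃ π : Hsub X δ, (π : Equiv.Perm (CQ X δ)) (rep q) = q := by
    intro q
    exact Quotient.exact (Quotient.out_eq (Quotient.mk oS q))
  have hrep2 : ∀ (π : Hsub X δ) (q), rep ((π : Equiv.Perm (CQ X δ)) q) = rep q := by
    intro π q
    have : (Quotient.mk oS ((π : Equiv.Perm (CQ X δ)) q)) = Quotient.mk oS q :=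
      Quotient.sound ⟨π⁻¹, by simp⟩
    simp only [hrepdef, this]
  -- choose transporters
  have hT : ∀ q : CQ X δ, ∃ (t : X ≃ X) (τ : Equiv.Perm (CQ X δ)), Isometry ⇑t ∧
      (∀ y, τ (cmk δ y) = cmk δ (t y)) ∧ τ (rep q) = q := by
    intro q
    obtain ⟨π, hπ⟩ := hrep1 q
    obtain ⟨f, hf, hs, hr⟩ := π.2
    exact ⟨Equiv.ofBijective f ⟨hf.injective, hs⟩, π, hf, hr, hπ⟩
  choose T τ hT1 hT2 hT3 using hT
  have hT2' : ∀ (q : CQ X δ) (y : X), τ q (cmk δ ((T q).symm y)) = cmk δ y := by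
    intro q y
    rw [hT2 q ((T q).symm y)]
    congr 1
    exact (T q).apply_symm_apply y
  have hTsymm_class : ∀ (q : CQ X δ) (x : X), cmk δ x = q → cmk δ ((T q).symm x) = rep q := by
    intro q x hx
    have h1 : τ q (cmk δ ((T q).symm x)) = q := by rw [hT2' q x, hx]
    have h2 : τ q (rep q) = q := hT3 q
    exact (τ q).injective (h1.trans h2.symm)
  have hTsymm_iso : ∀ q : CQ X δ, Isometry ⇑(T q).symm := by
    intro q a b
    have := hT1 q ((T q).symm a) ((T q).symm b)
    rw [(T q).apply_symm_apply, (T q).apply_symm_apply] at this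
    exact this.symm
  -- the lifted maps
  set hm : Hsub X δ → X → X :=
    fun π x => T ((π : Equiv.Perm (CQ X δ)) (cmk δ x)) ((T (cmk δ x)).symm x) with hhm
  have K1 : ∀ (π : Hsub X δ) (x : X),
      cmk δ (hm π x) = (π : Equiv.Perm (CQ X δ)) (cmk δ x) := by
    intro π x
    set q := cmk δ x with hq
    set q' := (π : Equiv.Perm (CQ X δ)) q with hq'
    have hz : cmk δ ((T q).symm x) = rep q := hTsymm_class q x rfl
    have hrepeq : rep q' = rep q := hrep2 π q
    have : cmk δ (hm π x) = τ q' (cmk δ ((T q).symm x)) := (hT2 q' _).symm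
    rw [this, hz, ← hrepeq, hT3 q']
  have K2 : ∀ (π π' : Hsub X δ) (x : X), hm π (hm π' x) = hm (π * π') x := by
    intro π π' x
    have h1 : cmk δ (hm π' x) = (π' : Equiv.Perm (CQ X δ)) (cmk δ x) := K1 π' x
    show T ((π : Equiv.Perm (CQ X δ)) (cmk δ (hm π' x))) ((T (cmk δ (hm π' x))).symm (hm π' x))
      = T (((π * π' : Hsub X δ) : Equiv.Perm (CQ X δ)) (cmk δ x)) ((T (cmk δ x)).symm x)
    rw [h1]
    have h2 : (T ((π' : Equiv.Perm (CQ X δ)) (cmk δ x))).symm (hm π' x)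
        = (T (cmk δ x)).symm x := by
      show (T ((π' : Equiv.Perm (CQ X δ)) (cmk δ x))).symm
        (T ((π' : Equiv.Perm (CQ X δ)) (cmk δ x)) ((T (cmk δ x)).symm x)) = _
      exact (T _).symm_apply_apply _
    rw [h2]
    have h3 : ((π * π' : Hsub X δ) : Equiv.Perm (CQ X δ)) (cmk δ x)
        = (π : Equiv.Perm (CQ X δ)) ((π' : Equiv.Perm (CQ X δ)) (cmk δ x)) := rfl
    rw [h3]
  have K3 : ∀ x : X, hm 1 x = x := by
    intro x
    show T ((1 : Equiv.Perm (CQ X δ)) (cmk δ x)) ((T (cmk δ x)).symm x) = x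
    simp only [Equiv.Perm.one_apply]
    exact (T (cmk δ x)).apply_symm_apply x
  have K4 : ∀ π : Hsub X δ, Continuous (hm π) := by
    intro π
    rw [continuous_iff_continuousAt]
    intro x
    have hopen : IsOpen {y : X | cmk δ y = cmk δ x} := isOpen_class δ hδ _
    have hg : Continuous fun y : X =>
        T ((π : Equiv.Perm (CQ X δ)) (cmk δ x)) ((T (cmk δ x)).symm y) :=
      ((hT1 _).continuous).comp (hTsymm_iso _).continuous
    refine ContinuousAt.congr hg.continuousAt ?_
    refine Filter.eventuallyEq_of_mem (hopen.mem_nhds (by simp)) ?_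
    intro y hy
    simp only [Set.mem_setOf_eq] at hy
    show T ((π : Equiv.Perm (CQ X δ)) (cmk δ x)) ((T (cmk δ x)).symm y) = hm π y
    simp only [hhm, hy]
  refine ⟨fun π => ⟨⟨hm π, hm π⁻¹, ?_, ?_⟩, K4 π, K4 π⁻¹⟩, ?_, K1⟩
  · intro x; rw [K2, inv_mul_cancel, K3]
  · intro x; rw [K2, mul_inv_cancel, K3]
  · intro π π'
    apply Homeomorph.ext
    intro x
    exact (K2 π π' x).symm

end Phi


section Words
variable {Γ : Type*} [Group Γ] {n : ℕ} {rels : Set (FreeGroup (Fin n))}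

/-- evaluation of free-group words in `Γ` through the presentation -/
def eE (e : PresentedGroup rels ≃* Γ) : FreeGroup (Fin n) →* Γ :=
  e.toMonoidHom.comp (PresentedGroup.mk rels)

theorem mk_single_true (k : Fin n) : FreeGroup.mk [(k, true)] = FreeGroup.of k := rfl

theorem mk_single_false (k : Fin n) : FreeGroup.mk [(k, false)] = (FreeGroup.of k)⁻¹ := by
  rw [← mk_single_true, FreeGroup.inv_mk]
  simp [FreeGroup.invRev]

end Words

theorem ruleD {Γ X : Type*} [Group Γ] [MetricSpace X] [CompactSpace X] [Nonempty X]
    [TotallyDisconnectedSpace X]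
    {n : ℕ} {rels : Set (FreeGroup (Fin n))} (e : PresentedGroup rels ≃* Γ)
    (δ ε : ℝ) (hδ : 0 < δ)
    (hdiam : ∀ x y : X, chainRel δ x y → dist x y < ε)
    (K : ℕ) (hK : 1 ≤ K) (CK : Finset Γ) (S : Finset Γ)
    (hCw : ∀ l : List (Fin n × Bool), l.length ≤ K → eE e (FreeGroup.mk l) ∈ CK)
    (hrelK : ∀ r ∈ rels, (FreeGroup.toWord r).length ≤ K)
    (hSK : ∀ γ ∈ S, ∃ l : List (Fin n × Bool), l.length ≤ K ∧ eE e (FreeGroup.mk l) = γ)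
    (F : Γ → X → X) (hiso : ∀ γ, Isometry (F γ)) (hsurj : ∀ γ, Surjective (F γ))
    (Hdef : ∀ γ ∈ CK, ∀ γ' ∈ CK, ∀ x : X, dist (F (γ * γ') x) (F γ (F γ' x)) < δ) :
    ∃ ν : Γ → X ≃ₜ X, (∀ γ γ' : Γ, ν (γ * γ') = (ν γ').trans (ν γ)) ∧
      ∀ γ ∈ S, ∀ x : X, dist (ν γ x) (F γ x) < ε := by
  classical
  obtain ⟨Φ, hΦmul, hΦclass⟩ := exists_Phi (X := X) δ hδ
  have hexists : ∀ γ : Γ, ∃ π : Equiv.Perm (CQ X δ), ∀ x, π (cmk δ x) = cmk δ (F γ x) :=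
    fun γ => exists_perm δ (hiso γ) (hsurj γ)
  choose σ hσ using hexists
  have hσH : ∀ γ, σ γ ∈ Hsub X δ := fun γ => ⟨F γ, hiso γ, hsurj γ, hσ γ⟩
  have W1 : ∀ (π π' : Equiv.Perm (CQ X δ)) (f f' : X → X),
      (∀ x, π (cmk δ x) = cmk δ (f x)) → (∀ x, π' (cmk δ x) = cmk δ (f' x)) →
      (∀ x, dist (f x) (f' x) < δ) → π = π' := by
    intro π π' f f' h1 h2 h3
    ext q
    induction q using Quotient.inductionOn with
    | h x =>
      show π (cmk δ x) = π' (cmk δ x)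
      rw [h1, h2]
      exact cmk_eq_of (chainRel_single (h3 x))
  have h1CK : (1 : Γ) ∈ CK := by
    have := hCw [] (by simp)
    rwa [← FreeGroup.one_eq_mk, map_one] at this
  have hmul' : ∀ γ γ', γ ∈ CK → γ' ∈ CK → σ (γ * γ') = σ γ * σ γ' := by
    intro γ γ' h h'
    refine W1 _ _ (F (γ * γ')) (fun x => F γ (F γ' x)) (hσ _) ?_ (Hdef γ h γ' h')
    intro x
    show (σ γ) ((σ γ') (cmk δ x)) = _
    rw [hσ, hσ]
  have hσ1 : σ 1 = 1 := by
    have hd : ∀ x : X, dist (F 1 x) (F 1 (F 1 x)) < δ := by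
      intro x; have := Hdef 1 h1CK 1 h1CK x; rwa [one_mul] at this
    have hfix : ∀ q, σ 1 (σ 1 q) = σ 1 q := by
      intro q
      induction q using Quotient.inductionOn with
      | h x =>
        show σ 1 (σ 1 (cmk δ x)) = σ 1 (cmk δ x)
        rw [hσ, hσ]
        exact (cmk_eq_of (chainRel_single (hd x))).symm
    ext q
    have := congrArg (⇑(σ 1)⁻¹) (hfix q)
    simpa using this
  have hinv : ∀ γ : Γ, γ ∈ CK → γ⁻¹ ∈ CK → σ γ⁻¹ = (σ γ)⁻¹ := by
    intro γ h h'
    have : σ γ * σ γ⁻¹ = 1 := by rw [← hmul' γ γ⁻¹ h h', mul_inv_cancel, hσ1]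
    exact eq_inv_of_mul_eq_one_right this
  set γk : Fin n → Γ := fun k => eE e (FreeGroup.of k) with hγk
  have hγkCK : ∀ k, γk k ∈ CK := fun k => hCw [(k, true)] (by simpa using hK)
  have hγkinvCK : ∀ k, (γk k)⁻¹ ∈ CK := by
    intro k
    have := hCw [(k, false)] (by simpa using hK)
    rwa [mk_single_false, map_inv] at this
  set fH : Fin n → Hsub X δ := fun k => ⟨σ (γk k), hσH _⟩ with hfH
  set Lf : FreeGroup (Fin n) →* Hsub X δ := FreeGroup.lift fH with hLf
  have W5 : ∀ l : List (Fin n × Bool), l.length ≤ K →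
      ((Lf (FreeGroup.mk l) : Equiv.Perm (CQ X δ)) = σ (eE e (FreeGroup.mk l))) := by
    intro l
    induction l using List.reverseRecOn with
    | nil =>
      intro _
      rw [← FreeGroup.one_eq_mk, map_one, map_one, hσ1]
      rfl
    | append_singleton l a ih =>
      intro hlen
      have hlen' : l.length ≤ K := by
        simp only [List.length_append, List.length_singleton] at hlen; omega
      have hmk : FreeGroup.mk (l ++ [a]) = FreeGroup.mk l * FreeGroup.mk [a] :=
        FreeGroup.mul_mk.symm
      obtain ⟨k, b⟩ := a
      have hLa : (Lf (FreeGroup.mk [(k,b)]) : Equiv.Perm (CQ X δ))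
          = σ (eE e (FreeGroup.mk [(k,b)])) := by
        cases b
        · rw [mk_single_false, map_inv, map_inv, hinv _ (hγkCK k) (hγkinvCK k)]
          have : Lf (FreeGroup.of k) = fH k := FreeGroup.lift_apply_of
          rw [this]
          rfl
        · rw [mk_single_true]
          have : Lf (FreeGroup.of k) = fH k := FreeGroup.lift_apply_of
          rw [this]
      calc (Lf (FreeGroup.mk (l ++ [(k,b)])) : Equiv.Perm (CQ X δ))
          = (Lf (FreeGroup.mk l) : Equiv.Perm (CQ X δ))
            * (Lf (FreeGroup.mk [(k,b)]) : Equiv.Perm (CQ X δ)) := by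
            rw [hmk, map_mul]; rfl
        _ = σ (eE e (FreeGroup.mk l)) * σ (eE e (FreeGroup.mk [(k,b)])) := by
            rw [ih hlen', hLa]
        _ = σ (eE e (FreeGroup.mk l) * eE e (FreeGroup.mk [(k,b)])) := by
            rw [hmul' _ _ (hCw l hlen') (hCw [(k,b)] (by simpa using hK))]
        _ = σ (eE e (FreeGroup.mk (l ++ [(k,b)]))) := by rw [← map_mul, ← hmk]
  have hrel : ∀ r ∈ rels, FreeGroup.lift fH r = 1 := by
    intro r hr
    have h1 : (FreeGroup.lift fH r : Equiv.Perm (CQ X δ)) = σ (eE e r) := by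
      have := W5 (FreeGroup.toWord r) (hrelK r hr)
      rwa [FreeGroup.mk_toWord] at this
    have h2 : eE e r = 1 := by
      have hq : (PresentedGroup.mk rels r) = (1 : PresentedGroup rels) :=
        (QuotientGroup.eq_one_iff r).2 (Subgroup.subset_normalClosure hr)
      show e (PresentedGroup.mk rels r) = 1
      rw [hq, map_one]
    rw [h2, hσ1] at h1
    exact Subtype.ext (by simpa using h1)
  set ρ0 : PresentedGroup rels →* Hsub X δ := PresentedGroup.toGroup hrel with hρ0
  have hρ0mk : ∀ w : FreeGroup (Fin n), ρ0 (PresentedGroup.mk rels w) = FreeGroup.lift fH w := by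
    intro w
    have hcomp : ρ0.comp (PresentedGroup.mk rels) = FreeGroup.lift fH := by
      apply FreeGroup.ext_hom
      intro k
      show ρ0 (PresentedGroup.mk rels (FreeGroup.of k)) = FreeGroup.lift fH (FreeGroup.of k)
      have h1 : PresentedGroup.mk rels (FreeGroup.of k) = PresentedGroup.of k := rfl
      rw [h1, PresentedGroup.toGroup.of, FreeGroup.lift_apply_of]
    exact DFunLike.congr_fun hcomp w
  set ρ : Γ → Hsub X δ := fun γ => ρ0 (e.symm γ) with hρ
  have hρmul : ∀ γ γ', ρ (γ * γ') = ρ γ * ρ γ' := by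
    intro γ γ'; rw [hρ]; simp [map_mul]
  have hρval : ∀ γ ∈ S, ((ρ γ : Hsub X δ) : Equiv.Perm (CQ X δ)) = σ γ := by
    intro γ hγ
    obtain ⟨l, hl, hlγ⟩ := hSK γ hγ
    have h1 : e.symm γ = PresentedGroup.mk rels (FreeGroup.mk l) := by
      rw [← hlγ]
      show e.symm (e (PresentedGroup.mk rels (FreeGroup.mk l))) = _
      exact e.symm_apply_apply _
    rw [hρ]
    dsimp only
    rw [h1, hρ0mk, ← hlγ]
    exact W5 l hl
  refine ⟨fun γ => Φ (ρ γ), ?_, ?_⟩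
  · intro γ γ'
    show Φ (ρ (γ * γ')) = (Φ (ρ γ')).trans (Φ (ρ γ))
    rw [hρmul]
    exact hΦmul (ρ γ) (ρ γ')
  · intro γ hγ x
    have h1 : cmk δ (Φ (ρ γ) x) = ((ρ γ : Hsub X δ) : Equiv.Perm (CQ X δ)) (cmk δ x) :=
      hΦclass _ _
    rw [hρval γ hγ, hσ] at h1
    exact hdiam _ _ (chainRel_of_cmk_eq h1)


section Delta
variable {X : Type*} [MetricSpace X]

theorem chainRel_mem {δ : ℝ} {V : Set X} (hV : ∀ u ∈ V, ∀ v, dist u v < δ → v ∈ V)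
    {x y : X} (h : chainRel δ x y) (hx : x ∈ V) : y ∈ V := by
  induction h with
  | refl => exact hx
  | tail _ hbc ih => exact hV _ ih _ hbc

variable [CompactSpace X] [TotallyDisconnectedSpace X] [Nonempty X]

theorem exists_delta (ε : ℝ) (hε : 0 < ε) :
    ∃ δ : ℝ, 0 < δ ∧ ∀ x y : X, chainRel δ x y → dist x y < ε := by
  have key : ∀ x : X, ∃ V : Set X, (IsOpen V ∧ x ∈ V ∧ V ⊆ ball x (ε/2)) ∧
      ∃ δ > 0, ∀ u ∈ V, ∀ v, dist u v < δ → v ∈ V := by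
    intro x
    obtain ⟨V, hVclopen, hxV, hVsub⟩ :=
      compact_exists_isClopen_in_isOpen (U := ball x (ε/2)) isOpen_ball
        (mem_ball_self (by linarith))
    refine ⟨V, ⟨hVclopen.2, hxV, hVsub⟩, ?_⟩
    obtain ⟨δ, hδ, hth⟩ := (hVclopen.1.isCompact).exists_thickening_subset_open hVclopen.2
      subset_rfl
    exact ⟨δ, hδ, fun u hu v hv => hth (mem_thickening_iff.2 ⟨u, hu, by rwa [dist_comm]⟩)⟩
  choose V hV hδV using key
  choose δf hδf hinv using hδV
  obtain ⟨t, ht⟩ := isCompact_univ.elim_finite_subcover V (fun x => (hV x).1)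
    (fun x _ => Set.mem_iUnion.2 ⟨x, (hV x).2.1⟩)
  have htne : t.Nonempty := by
    rcases Set.univ_nonempty (α := X) with ⟨x, -⟩
    rcases Set.mem_iUnion₂.1 (ht (Set.mem_univ x)) with ⟨i, hi, -⟩
    exact ⟨i, hi⟩
  refine ⟨t.inf' htne δf, ?_, ?_⟩
  · exact (Finset.lt_inf'_iff htne).2 fun i _ => hδf i
  · intro x y hxy
    rcases Set.mem_iUnion₂.1 (ht (Set.mem_univ x)) with ⟨i, hi, hxVi⟩
    have hy : y ∈ V i := by
      refine chainRel_mem (fun u hu v hv => hinv i u hu v ?_) hxy hxVi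
      exact lt_of_lt_of_le hv (Finset.inf'_le _ hi)
    have h1 := (hV i).2.2 hxVi
    have h2 := (hV i).2.2 hy
    rw [mem_ball] at h1 h2
    calc dist x y ≤ dist x i + dist y i := dist_triangle_right _ _ _
    _ < ε/2 + ε/2 := by linarith
    _ = ε := by linarith

end Delta


open Pointwise in
theorem levelB {Γ X : Type*} [Group Γ] [MetricSpace X] [CompactSpace X]
    [TotallyDisconnectedSpace X] [Nonempty X]
    {n : ℕ} {rels : Set (FreeGroup (Fin n))} (e : PresentedGroup rels ≃* Γ)
    (hfin : rels.Finite)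
    (μ : ℕ → Γ → X → X)
    (hiso : ∀ (i : ℕ) (γ : Γ), Isometry (μ i γ))
    (hsurj : ∀ (i : ℕ) (γ : Γ), Function.Surjective (μ i γ))
    (happrox : ∀ ε : ℝ, 0 < ε → ∀ S : Finset Γ, ∃ j : ℕ, ∀ i ≥ j,
      ∀ γ ∈ S, ∀ δ ∈ S, ∀ x : X, dist (μ i (γ * δ) x) (μ i γ (μ i δ x)) < ε)
    (ε : ℝ) (hε : 0 < ε) (S : Finset Γ) :
    ∃ (j : ℕ) (ν : ℕ → Γ → X ≃ₜ X),
      (∀ (i : ℕ) (γ γ' : Γ), ν i (γ * γ') = (ν i γ').trans (ν i γ)) ∧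
      ∀ i ≥ j, ∀ γ ∈ S, ∀ x : X, dist (ν i γ x) (μ i γ x) < ε := by
  classical
  obtain ⟨δ, hδ, hdiam⟩ := exists_delta (X := X) ε hε
  -- word data
  have Esurj : Surjective (eE e) := e.surjective.comp (PresentedGroup.mk_surjective rels)
  set lfun : Γ → List (Fin n × Bool) := fun γ => FreeGroup.toWord (surjInv Esurj γ) with hlfun
  have hlval : ∀ γ : Γ, eE e (FreeGroup.mk (lfun γ)) = γ := by
    intro γ
    rw [hlfun]
    simp only [FreeGroup.mk_toWord]
    exact surjInv_eq Esurj γ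
  set mS : ℕ := S.sup fun γ => (lfun γ).length with hmS
  set L : ℕ := hfin.toFinset.sup fun r => (FreeGroup.toWord r).length with hL
  set K : ℕ := max mS L + 1 with hKdef
  have hK : 1 ≤ K := Nat.le_add_left 1 _
  -- finsets of products of generators
  set gens : Finset Γ := (Finset.univ : Finset (Fin n × Bool)).image
      (fun p => eE e (FreeGroup.mk [p])) with hgens
  set C : ℕ → Finset Γ := fun m => Nat.rec {1} (fun _ Cm => Cm ∪ Cm * gens) m with hCdef
  have hC0 : C 0 = {1} := rfl
  have hCs : ∀ m, C (m + 1) = C m ∪ C m * gens := fun m => rfl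
  have Cmono : ∀ {m m' : ℕ}, m ≤ m' → C m ⊆ C m' := by
    intro m m' h
    induction h with
    | refl => exact subset_rfl
    | step h' ih => exact ih.trans (by rw [hCs]; exact Finset.subset_union_left)
  have hmem : ∀ l : List (Fin n × Bool), eE e (FreeGroup.mk l) ∈ C l.length := by
    intro l
    induction l using List.reverseRecOn with
    | nil =>
      rw [← FreeGroup.one_eq_mk, map_one, List.length_nil, hC0]
      exact Finset.mem_singleton_self 1
    | append_singleton l a ih =>
      have hmk : FreeGroup.mk (l ++ [a]) = FreeGroup.mk l * FreeGroup.mk [a] :=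
        FreeGroup.mul_mk.symm
      rw [hmk, map_mul]
      have hgmem : eE e (FreeGroup.mk [a]) ∈ gens := by
        rw [hgens]
        exact Finset.mem_image.2 ⟨a, Finset.mem_univ a, rfl⟩
      have : eE e (FreeGroup.mk l) * eE e (FreeGroup.mk [a]) ∈ C l.length * gens :=
        Finset.mul_mem_mul ih hgmem
      rw [List.length_append, List.length_singleton, hCs]
      exact Finset.mem_union_right _ this
  have hCw : ∀ l : List (Fin n × Bool), l.length ≤ K → eE e (FreeGroup.mk l) ∈ C K :=
    fun l hl => Cmono hl (hmem l)
  have hrelK : ∀ r ∈ rels, (FreeGroup.toWord r).length ≤ K := by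
    intro r hr
    have : (FreeGroup.toWord r).length ≤ L :=
      Finset.le_sup (f := fun r => (FreeGroup.toWord r).length) (hfin.mem_toFinset.2 hr)
    omega
  have hSK : ∀ γ ∈ S, ∃ l : List (Fin n × Bool), l.length ≤ K ∧ eE e (FreeGroup.mk l) = γ := by
    intro γ hγ
    refine ⟨lfun γ, ?_, hlval γ⟩
    have : (lfun γ).length ≤ mS := Finset.le_sup (f := fun γ => (lfun γ).length) hγ
    omega
  obtain ⟨j, hj⟩ := happrox δ hδ (C K)
  have build : ∀ i : ℕ, j ≤ i → ∃ νi : Γ → X ≃ₜ X,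
      (∀ γ γ' : Γ, νi (γ * γ') = (νi γ').trans (νi γ)) ∧
      ∀ γ ∈ S, ∀ x : X, dist (νi γ x) (μ i γ x) < ε := fun i hi =>
    ruleD e δ ε hδ hdiam K hK (C K) S hCw hrelK hSK (μ i) (hiso i) (hsurj i) (hj i hi)
  refine ⟨j, fun i => if h : j ≤ i then (build i h).choose else fun _ => Homeomorph.refl X,
    ?_, ?_⟩
  · intro i γ γ'
    by_cases h : j ≤ i
    · simp only [dif_pos h]
      exact (build i h).choose_spec.1 γ γ'
    · simp only [dif_neg h]
      exact Homeomorph.ext fun _ => rfl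
  · intro i hi γ hγ x
    simp only [dif_pos hi]
    exact (build i hi).choose_spec.2 γ hγ x

end AIA


/-- A group is finitely presented if it is isomorphic to the quotient of a finitely
generated free group by the normal closure of finitely many relations. -/
def IsFinitelyPresentedGroup (Γ : Type*) [Group Γ] : Prop :=
  ∃ (n : ℕ) (rels : Set (FreeGroup (Fin n))), rels.Finite ∧
    Nonempty (PresentedGroup rels ≃* Γ)

/-- Isometric almost-actions of a finitely presented group on a
Cantor set can be perturbed to genuine actions by homeomorphisms: if `μ i : Γ → Isom X`
are set maps which are asymptotically multiplicative (uniformly on `X`, on finite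
subsets of `Γ`), then there are genuine homomorphisms `μt i : Γ → Homeo X` which
asymptotically agree with the `μ i` (uniformly on `X`, on finite subsets of `Γ`). -/
theorem almost_isometric_actions_perturb_to_actions
    {Γ X : Type*} [Group Γ] [MetricSpace X] [CompactSpace X]
    [TotallyDisconnectedSpace X] [PerfectSpace X] [Nonempty X]
    (hfp : IsFinitelyPresentedGroup Γ)
    (μ : ℕ → Γ → X → X)
    (hiso : ∀ (i : ℕ) (γ : Γ), Isometry (μ i γ))
    (hsurj : ∀ (i : ℕ) (γ : Γ), Function.Surjective (μ i γ))
    (happrox : ∀ ε : ℝ, 0 < ε → ∀ S : Finset Γ, ∃ j : ℕ, ∀ i ≥ j,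
      ∀ γ ∈ S, ∀ δ ∈ S, ∀ x : X, dist (μ i (γ * δ) x) (μ i γ (μ i δ x)) < ε) :
    ∃ μt : ℕ → Γ → X ≃ₜ X,
      (∀ (i : ℕ) (γ δ : Γ), μt i (γ * δ) = (μt i δ).trans (μt i γ)) ∧
      ∀ ε : ℝ, 0 < ε → ∀ S : Finset Γ, ∃ j : ℕ, ∀ i ≥ j,
        ∀ γ ∈ S, ∀ x : X, dist (μt i γ x) (μ i γ x) < ε := by
  classical
  obtain ⟨n, rels, hfin, ⟨e⟩⟩ := hfp
  -- Γ is countable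
  have hFGc : Countable (FreeGroup (Fin n)) := by
    have hsur : Function.Surjective (FreeGroup.mk (α := Fin n)) :=
      fun x => ⟨FreeGroup.toWord x, FreeGroup.mk_toWord⟩
    exact hsur.countable
  have hΓc : Countable Γ :=
    (e.surjective.comp (PresentedGroup.mk_surjective rels)).countable
  haveI : Nonempty Γ := ⟨1⟩
  obtain ⟨f, hf⟩ := exists_surjective_nat Γ
  set Sm : ℕ → Finset Γ := fun m => (Finset.range m).image f with hSm
  have Smono : ∀ {m m' : ℕ}, m ≤ m' → Sm m ⊆ Sm m' := fun h =>
    Finset.image_subset_image (Finset.range_subset_range.2 h)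
  have hlev : ∀ m : ℕ, ∃ (j : ℕ) (ν : ℕ → Γ → X ≃ₜ X),
      (∀ (i : ℕ) (γ γ' : Γ), ν i (γ * γ') = (ν i γ').trans (ν i γ)) ∧
      ∀ i ≥ j, ∀ γ ∈ Sm m, ∀ x : X, dist (ν i γ x) (μ i γ x) < 1 / (m + 1) := by
    intro m
    exact AIA.levelB e hfin μ hiso hsurj happrox (1 / (m + 1)) (by positivity) (Sm m)
  choose jf νf hom happ using hlev
  set g : ℕ → ℕ := fun m => (Finset.range (m + 1)).sup jf with hg
  have gmono : ∀ {m m' : ℕ}, m ≤ m' → g m ≤ g m' := fun h =>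
    Finset.sup_mono (Finset.range_subset_range.2 (by omega))
  have hjg : ∀ m, jf m ≤ g m := fun m =>
    Finset.le_sup (Finset.mem_range.2 (Nat.lt_succ_self m))
  refine ⟨fun i => if h : g 0 ≤ i then νf (Nat.findGreatest (fun m => g m ≤ i) i) i
      else fun _ => Homeomorph.refl X, ?_, ?_⟩
  · intro i γ γ'
    by_cases h : g 0 ≤ i
    · simp only [dif_pos h]
      exact hom _ i γ γ'
    · simp only [dif_neg h]
      exact Homeomorph.ext fun _ => rfl
  · intro ε hε S
    obtain ⟨m1, hm1⟩ := exists_nat_one_div_lt hε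
    have hSmem : ∀ γ : Γ, ∃ k : ℕ, f k = γ := hf
    choose kf hkf using hSmem
    set m2 : ℕ := S.sup kf + 1 with hm2
    have hSsub : S ⊆ Sm m2 := by
      intro γ hγ
      refine Finset.mem_image.2 ⟨kf γ, Finset.mem_range.2 ?_, hkf γ⟩
      have := Finset.le_sup (f := kf) hγ
      omega
    set m0 : ℕ := max m1 m2 with hm0
    refine ⟨max (g m0) m0, ?_⟩
    intro i hi γ hγ x
    have hgm0 : g m0 ≤ i := le_trans (le_max_left _ _) hi
    have hm0i : m0 ≤ i := le_trans (le_max_right _ _) hi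
    have hg0 : g 0 ≤ i := le_trans (gmono (Nat.zero_le m0)) hgm0
    simp only [dif_pos hg0]
    set ms : ℕ := Nat.findGreatest (fun m => g m ≤ i) i with hms
    have hm0ms : m0 ≤ ms := Nat.le_findGreatest hm0i hgm0
    have hgms : g ms ≤ i := Nat.findGreatest_spec (P := fun m => g m ≤ i) hm0i hgm0
    have hims : jf ms ≤ i := le_trans (hjg ms) hgms
    have hγms : γ ∈ Sm ms := Smono (le_trans (le_max_right m1 m2) hm0ms) (hSsub hγ)
    have hd := happ ms i hims γ hγms x
    have hle : (1 : ℝ) / (ms + 1) ≤ 1 / (m1 + 1) := by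
      have h1 : (m1 : ℝ) + 1 ≤ (ms : ℝ) + 1 := by
        have : m1 ≤ ms := le_trans (le_max_left m1 m2) hm0ms
        exact_mod_cast by omega
      exact one_div_le_one_div_of_le (by positivity) h1
    calc dist ((νf ms i γ) x) (μ i γ x) < 1 / (ms + 1) := hd
      _ ≤ 1 / (m1 + 1) := hle
      _ < ε := hm1
end
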